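/- arXiv:1703.03896 — 3 statements merged into one kernel-verified Lean document; each statement's English description precedes it below -/
import Mathlib

section
/- Let k ≥ 4, ℓ ≥ 4, and m ≥ kℓ be integers, let T₁, T₂, T₃ be three pairwise disjoint ℓ-element subsets of [m], and let F be an intersecting family of k-element subsets of [m] such that every member of F intersects each of T₁, T₂, T₃. Let F₄ = {F ∈ F : |F ∩ (T₁ ∪ T₂ ∪ T₃)| = 4}. Then |F₄| ≤ 3(ℓ−1)ℓ² · C(m−3ℓ, k−4). -/
open Finset


lemma two_mul_choose_two (a : ℕ) : 2 * Nat.choose a 2 = a * (a - 1) := by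
  rw [Nat.choose_two_right]
  rcases a with _ | n
  · simp
  · have h : 2 ∣ (n+1) * ((n+1) - 1) := by
      simp only [Nat.add_sub_cancel]
      have := (Nat.even_mul_succ_self n).two_dvd
      rwa [mul_comm] at this
    exact Nat.mul_div_cancel' h

lemma choose_two_shift (a : ℕ) : Nat.choose a 2 * (a - 2) = a * Nat.choose (a-1) 2 := by
  have h2 : 2 * (Nat.choose a 2 * (a - 2)) = 2 * (a * Nat.choose (a-1) 2) := by
    rw [← mul_assoc, two_mul_choose_two, mul_left_comm, two_mul_choose_two]
    rcases a with _ | _ | n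
    · simp
    · simp
    · simp only [Nat.add_sub_cancel, Nat.succ_sub_one]
      show (n+2) * (n+1) * (n+2-2) = (n+2) * ((n+1) * n)
      simp only [Nat.add_sub_cancel]
      ring
  omega

def npat (k' τ a₁ a₂ a₃ b : ℕ) : ℕ :=
  if τ = 0 then Nat.choose a₁ 2 * Nat.choose b k' * a₂ * a₃
  else if τ = 1 then Nat.choose a₂ 2 * Nat.choose b k' * a₁ * a₃
  else Nat.choose a₃ 2 * Nat.choose b k' * a₁ * a₂

def redA (τ i a : ℕ) : ℕ := if min τ 2 = min i 2 then a - 2 else a - 1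

def W (k' : ℕ) : List ℕ → ℕ → ℕ → ℕ → ℕ → ℕ
  | [], _, _, _, _ => 1
  | τ :: L, a₁, a₂, a₃, b =>
      npat k' τ a₁ a₂ a₃ b * W k' L (redA τ 0 a₁) (redA τ 1 a₂) (redA τ 2 a₃) (b - k')

lemma redA_comm (τ τ' i a : ℕ) : redA τ i (redA τ' i a) = redA τ' i (redA τ i a) := by
  unfold redA
  split <;> split <;> omega

lemma swapDS (a c M : ℕ) :
    (Nat.choose a 2 * (a-2)) * (c * Nat.choose (c-1) 2) * M
      = (Nat.choose c 2 * (c-2)) * (a * Nat.choose (a-1) 2) * M := by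
  rw [choose_two_shift a, ← choose_two_shift c]; ring

lemma npat_exchange (k' τ τ' a₁ a₂ a₃ b : ℕ) :
    npat k' τ a₁ a₂ a₃ b *
      npat k' τ' (redA τ 0 a₁) (redA τ 1 a₂) (redA τ 2 a₃) (b - k')
    = npat k' τ' a₁ a₂ a₃ b *
      npat k' τ (redA τ' 0 a₁) (redA τ' 1 a₂) (redA τ' 2 a₃) (b - k') := by
  have hτ : τ = 0 ∨ τ = 1 ∨ (τ ≠ 0 ∧ τ ≠ 1) := by omega
  have hτ' : τ' = 0 ∨ τ' = 1 ∨ (τ' ≠ 0 ∧ τ' ≠ 1) := by omega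
  have hmin : ∀ s : ℕ, s ≠ 0 → s ≠ 1 → min s 2 = 2 := fun s h1 h2 => by omega
  rcases hτ with rfl | rfl | ⟨h1, h2⟩ <;> rcases hτ' with rfl | rfl | ⟨g1, g2⟩
  · rfl
  · -- τ = 0, τ' = 1
    simp only [npat, redA, if_pos, if_neg, reduceIte]
    calc Nat.choose a₁ 2 * Nat.choose b k' * a₂ * a₃ *
          (Nat.choose (a₂-1) 2 * Nat.choose (b-k') k' * (a₁-2) * (a₃-1))
        = (Nat.choose a₁ 2 * (a₁-2)) * (a₂ * Nat.choose (a₂-1) 2) *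
            (Nat.choose b k' * Nat.choose (b-k') k' * a₃ * (a₃-1)) := by ring
      _ = (Nat.choose a₂ 2 * (a₂-2)) * (a₁ * Nat.choose (a₁-1) 2) *
            (Nat.choose b k' * Nat.choose (b-k') k' * a₃ * (a₃-1)) := swapDS _ _ _
      _ = Nat.choose a₂ 2 * Nat.choose b k' * a₁ * a₃ *
            (Nat.choose (a₁-1) 2 * Nat.choose (b-k') k' * (a₂-2) * (a₃-1)) := by ring
  · -- τ = 0, τ' ≥ 2
    simp only [npat, redA, if_neg g1, if_neg g2, hmin τ' g1 g2, reduceIte]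
    calc Nat.choose a₁ 2 * Nat.choose b k' * a₂ * a₃ *
          (Nat.choose (a₃-1) 2 * Nat.choose (b-k') k' * (a₁-2) * (a₂-1))
        = (Nat.choose a₁ 2 * (a₁-2)) * (a₃ * Nat.choose (a₃-1) 2) *
            (Nat.choose b k' * Nat.choose (b-k') k' * a₂ * (a₂-1)) := by ring
      _ = (Nat.choose a₃ 2 * (a₃-2)) * (a₁ * Nat.choose (a₁-1) 2) *
            (Nat.choose b k' * Nat.choose (b-k') k' * a₂ * (a₂-1)) := swapDS _ _ _
      _ = Nat.choose a₃ 2 * Nat.choose b k' * a₁ * a₂ *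
            (Nat.choose (a₁-1) 2 * Nat.choose (b-k') k' * (a₂-1) * (a₃-2)) := by ring
  · -- τ = 1, τ' = 0
    simp only [npat, redA, reduceIte]
    calc Nat.choose a₂ 2 * Nat.choose b k' * a₁ * a₃ *
          (Nat.choose (a₁-1) 2 * Nat.choose (b-k') k' * (a₂-2) * (a₃-1))
        = (Nat.choose a₂ 2 * (a₂-2)) * (a₁ * Nat.choose (a₁-1) 2) *
            (Nat.choose b k' * Nat.choose (b-k') k' * a₃ * (a₃-1)) := by ring
      _ = (Nat.choose a₁ 2 * (a₁-2)) * (a₂ * Nat.choose (a₂-1) 2) *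
            (Nat.choose b k' * Nat.choose (b-k') k' * a₃ * (a₃-1)) := swapDS _ _ _
      _ = Nat.choose a₁ 2 * Nat.choose b k' * a₂ * a₃ *
            (Nat.choose (a₂-1) 2 * Nat.choose (b-k') k' * (a₁-2) * (a₃-1)) := by ring
  · rfl
  · -- τ = 1, τ' ≥ 2
    simp only [npat, redA, if_neg g1, if_neg g2, hmin τ' g1 g2, reduceIte]
    calc Nat.choose a₂ 2 * Nat.choose b k' * a₁ * a₃ *
          (Nat.choose (a₃-1) 2 * Nat.choose (b-k') k' * (a₁-1) * (a₂-2))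
        = (Nat.choose a₂ 2 * (a₂-2)) * (a₃ * Nat.choose (a₃-1) 2) *
            (Nat.choose b k' * Nat.choose (b-k') k' * a₁ * (a₁-1)) := by ring
      _ = (Nat.choose a₃ 2 * (a₃-2)) * (a₂ * Nat.choose (a₂-1) 2) *
            (Nat.choose b k' * Nat.choose (b-k') k' * a₁ * (a₁-1)) := swapDS _ _ _
      _ = Nat.choose a₃ 2 * Nat.choose b k' * a₁ * a₂ *
            (Nat.choose (a₂-1) 2 * Nat.choose (b-k') k' * (a₁-1) * (a₃-2)) := by ring
  · -- τ ≥ 2, τ' = 0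
    simp only [npat, redA, if_neg h1, if_neg h2, hmin τ h1 h2, reduceIte]
    calc Nat.choose a₃ 2 * Nat.choose b k' * a₁ * a₂ *
          (Nat.choose (a₁-1) 2 * Nat.choose (b-k') k' * (a₂-1) * (a₃-2))
        = (Nat.choose a₃ 2 * (a₃-2)) * (a₁ * Nat.choose (a₁-1) 2) *
            (Nat.choose b k' * Nat.choose (b-k') k' * a₂ * (a₂-1)) := by ring
      _ = (Nat.choose a₁ 2 * (a₁-2)) * (a₃ * Nat.choose (a₃-1) 2) *
            (Nat.choose b k' * Nat.choose (b-k') k' * a₂ * (a₂-1)) := swapDS _ _ _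
      _ = Nat.choose a₁ 2 * Nat.choose b k' * a₂ * a₃ *
            (Nat.choose (a₃-1) 2 * Nat.choose (b-k') k' * (a₁-2) * (a₂-1)) := by ring
  · -- τ ≥ 2, τ' = 1
    simp only [npat, redA, if_neg h1, if_neg h2, hmin τ h1 h2, reduceIte]
    calc Nat.choose a₃ 2 * Nat.choose b k' * a₁ * a₂ *
          (Nat.choose (a₂-1) 2 * Nat.choose (b-k') k' * (a₁-1) * (a₃-2))
        = (Nat.choose a₃ 2 * (a₃-2)) * (a₂ * Nat.choose (a₂-1) 2) *
            (Nat.choose b k' * Nat.choose (b-k') k' * a₁ * (a₁-1)) := by ring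
      _ = (Nat.choose a₂ 2 * (a₂-2)) * (a₃ * Nat.choose (a₃-1) 2) *
            (Nat.choose b k' * Nat.choose (b-k') k' * a₁ * (a₁-1)) := swapDS _ _ _
      _ = Nat.choose a₂ 2 * Nat.choose b k' * a₁ * a₃ *
            (Nat.choose (a₃-1) 2 * Nat.choose (b-k') k' * (a₁-1) * (a₂-2)) := by ring
  · -- both ≥ 2
    simp only [npat, redA, if_neg h1, if_neg h2, if_neg g1, if_neg g2,
      hmin τ h1 h2, hmin τ' g1 g2]

variable {α : Type*} [DecidableEq α]

def patAux (k' : ℕ) (D S₁ S₂ B : Finset α) : Finset (Finset α) :=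
  ((D.powersetCard 2 ×ˢ B.powersetCard k') ×ˢ S₁ ×ˢ S₂).image
    (fun z => (z.1.1 ∪ z.1.2) ∪ {z.2.1, z.2.2})

lemma mem_patAux {k' : ℕ} {D S₁ S₂ B : Finset α} {X : Finset α} :
    X ∈ patAux k' D S₁ S₂ B ↔
      ∃ P Q x y, P ⊆ D ∧ P.card = 2 ∧ Q ⊆ B ∧ Q.card = k' ∧ x ∈ S₁ ∧ y ∈ S₂ ∧
        X = (P ∪ Q) ∪ {x, y} := by
  constructor
  · intro h
    obtain ⟨z, hz, rfl⟩ := mem_image.mp h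
    obtain ⟨⟨P, Q⟩, x, y⟩ := z
    simp only [mem_product, mem_powersetCard] at hz
    exact ⟨P, Q, x, y, hz.1.1.1, hz.1.1.2, hz.1.2.1, hz.1.2.2, hz.2.1, hz.2.2, rfl⟩
  · rintro ⟨P, Q, x, y, hP, hP2, hQ, hQ2, hx, hy, rfl⟩
    apply mem_image.mpr
    exact ⟨⟨⟨P, Q⟩, x, y⟩, by simp only [mem_product, mem_powersetCard]; exact ⟨⟨⟨hP, hP2⟩, hQ, hQ2⟩, hx, hy⟩, rfl⟩

lemma union3_inter (P Q R D : Finset α) :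
    ((P ∪ Q) ∪ R) ∩ D = ((P ∩ D) ∪ (Q ∩ D)) ∪ (R ∩ D) := by
  rw [union_inter_distrib_right, union_inter_distrib_right]

lemma patAux_pieces {D S₁ S₂ B : Finset α}
    (hDS₁ : Disjoint D S₁) (hDS₂ : Disjoint D S₂) (hDB : Disjoint D B)
    (hS₁S₂ : Disjoint S₁ S₂) (hS₁B : Disjoint S₁ B) (hS₂B : Disjoint S₂ B)
    {P Q : Finset α} {x y : α}
    (hP : P ⊆ D) (hQ : Q ⊆ B) (hx : x ∈ S₁) (hy : y ∈ S₂) :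
    ((P ∪ Q) ∪ {x, y}) ∩ D = P ∧ ((P ∪ Q) ∪ {x, y}) ∩ B = Q ∧
      ((P ∪ Q) ∪ {x, y}) ∩ S₁ = {x} ∧ ((P ∪ Q) ∪ {x, y}) ∩ S₂ = {y} := by
  have hxD : x ∉ D := fun h => (disjoint_left.mp hDS₁ h) hx
  have hyD : y ∉ D := fun h => (disjoint_left.mp hDS₂ h) hy
  have hxB : x ∉ B := fun h => (disjoint_left.mp hS₁B hx) h
  have hyB : y ∉ B := fun h => (disjoint_left.mp hS₂B hy) h
  have hxS₂ : x ∉ S₂ := fun h => (disjoint_left.mp hS₁S₂ hx) h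
  have hyS₁ : y ∉ S₁ := fun h => (disjoint_left.mp hS₁S₂ h) hy
  have hPB : P ∩ B = ∅ := by
    rw [← disjoint_iff_inter_eq_empty]; exact hDB.mono_left hP
  have hPS₁ : P ∩ S₁ = ∅ := by
    rw [← disjoint_iff_inter_eq_empty]; exact hDS₁.mono_left hP
  have hPS₂ : P ∩ S₂ = ∅ := by
    rw [← disjoint_iff_inter_eq_empty]; exact hDS₂.mono_left hP
  have hQD : Q ∩ D = ∅ := by
    rw [← disjoint_iff_inter_eq_empty]; exact (hDB.symm.mono_left hQ)
  have hQS₁ : Q ∩ S₁ = ∅ := by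
    rw [← disjoint_iff_inter_eq_empty]; exact (hS₁B.symm.mono_left hQ)
  have hQS₂ : Q ∩ S₂ = ∅ := by
    rw [← disjoint_iff_inter_eq_empty]; exact (hS₂B.symm.mono_left hQ)
  have hpair : ∀ (W : Finset α), x ∉ W → y ∉ W → ({x, y} : Finset α) ∩ W = ∅ := by
    intro W hxW hyW
    rw [← disjoint_iff_inter_eq_empty, disjoint_left]
    intro a ha
    rcases mem_insert.mp ha with rfl | ha
    · exact hxW
    · rw [mem_singleton] at ha; subst ha; exact hyW
  refine ⟨?_, ?_, ?_, ?_⟩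
  · rw [union3_inter, inter_eq_left.mpr hP, hQD, hpair D hxD hyD, union_empty, union_empty]
  · rw [union3_inter, hPB, inter_eq_left.mpr hQ, hpair B hxB hyB, empty_union, union_empty]
  · rw [union3_inter, hPS₁, hQS₁]
    have : ({x, y} : Finset α) ∩ S₁ = {x} := by
      ext a
      simp only [mem_inter, mem_insert, mem_singleton]
      constructor
      · rintro ⟨rfl | rfl, h⟩
        · rfl
        · exact absurd h hyS₁
      · rintro rfl; exact ⟨Or.inl rfl, hx⟩
    rw [this, union_empty, empty_union]
  · rw [union3_inter, hPS₂, hQS₂]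
    have : ({x, y} : Finset α) ∩ S₂ = {y} := by
      ext a
      simp only [mem_inter, mem_insert, mem_singleton]
      constructor
      · rintro ⟨rfl | rfl, h⟩
        · exact absurd h hxS₂
        · rfl
      · rintro rfl; exact ⟨Or.inr rfl, hy⟩
    rw [this, union_empty, empty_union]

lemma card_patAux {k' : ℕ} {D S₁ S₂ B : Finset α}
    (hDS₁ : Disjoint D S₁) (hDS₂ : Disjoint D S₂) (hDB : Disjoint D B)
    (hS₁S₂ : Disjoint S₁ S₂) (hS₁B : Disjoint S₁ B) (hS₂B : Disjoint S₂ B) :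
    (patAux k' D S₁ S₂ B).card
      = Nat.choose D.card 2 * Nat.choose B.card k' * S₁.card * S₂.card := by
  rw [patAux, card_image_of_injOn, card_product, card_product, card_product,
    card_powersetCard, card_powersetCard]
  · ring
  · rintro ⟨⟨P, Q⟩, ⟨x, y⟩⟩ hz ⟨⟨P', Q'⟩, ⟨x', y'⟩⟩ hz' heq
    simp only [coe_product, Set.mem_prod, mem_coe, mem_powersetCard] at hz hz'
    obtain ⟨⟨⟨hP, _⟩, hQ, _⟩, hx, hy⟩ := hz
    obtain ⟨⟨⟨hP', _⟩, hQ', _⟩, hx', hy'⟩ := hz'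
    obtain ⟨e1, e2, e3, e4⟩ := patAux_pieces hDS₁ hDS₂ hDB hS₁S₂ hS₁B hS₂B hP hQ hx hy
    obtain ⟨f1, f2, f3, f4⟩ := patAux_pieces hDS₁ hDS₂ hDB hS₁S₂ hS₁B hS₂B hP' hQ' hx' hy'
    simp only at heq
    rw [heq] at e1 e2 e3 e4
    have hxx : x = x' := singleton_injective (e3.symm.trans f3)
    have hyy : y = y' := singleton_injective (e4.symm.trans f4)
    simp only [Prod.mk.injEq]
    exact ⟨⟨e1.symm.trans f1, e2.symm.trans f2⟩, hxx, hyy⟩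

lemma patAux_inter_cards {k' : ℕ} {D S₁ S₂ B : Finset α}
    (hDS₁ : Disjoint D S₁) (hDS₂ : Disjoint D S₂) (hDB : Disjoint D B)
    (hS₁S₂ : Disjoint S₁ S₂) (hS₁B : Disjoint S₁ B) (hS₂B : Disjoint S₂ B)
    {X : Finset α} (hX : X ∈ patAux k' D S₁ S₂ B) :
    (X ∩ D).card = 2 ∧ (X ∩ B).card = k' ∧ (X ∩ S₁).card = 1 ∧ (X ∩ S₂).card = 1 := by
  obtain ⟨P, Q, x, y, hP, hP2, hQ, hQ2, hx, hy, rfl⟩ := mem_patAux.mp hX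
  obtain ⟨e1, e2, e3, e4⟩ := patAux_pieces hDS₁ hDS₂ hDB hS₁S₂ hS₁B hS₂B hP hQ hx hy
  rw [e1, e2, e3, e4]
  exact ⟨hP2, hQ2, card_singleton x, card_singleton y⟩

lemma patAux_sdiff {k' : ℕ} {D S₁ S₂ B : Finset α} (Y : Finset α) :
    patAux k' (D \ Y) (S₁ \ Y) (S₂ \ Y) (B \ Y) =
      (patAux k' D S₁ S₂ B).filter (fun X => Disjoint Y X) := by
  ext X
  simp only [mem_filter, mem_patAux]
  constructor
  · rintro ⟨P, Q, x, y, hP, hP2, hQ, hQ2, hx, hy, rfl⟩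
    have hPD : P ⊆ D := hP.trans sdiff_subset
    have hQB : Q ⊆ B := hQ.trans sdiff_subset
    refine ⟨⟨P, Q, x, y, hPD, hP2, hQB, hQ2, (mem_sdiff.mp hx).1, (mem_sdiff.mp hy).1, rfl⟩, ?_⟩
    rw [disjoint_right]
    intro a ha
    simp only [mem_union, mem_insert, mem_singleton] at ha
    rcases ha with (hP' | hQ') | rfl | rfl
    · exact (mem_sdiff.mp (hP hP')).2
    · exact (mem_sdiff.mp (hQ hQ')).2
    · exact (mem_sdiff.mp hx).2
    · exact (mem_sdiff.mp hy).2
  · rintro ⟨⟨P, Q, x, y, hP, hP2, hQ, hQ2, hx, hy, rfl⟩, hdisj⟩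
    have hsub : ∀ a, a ∈ (P ∪ Q) ∪ {x, y} → a ∉ Y := fun a ha => disjoint_right.mp hdisj ha
    refine ⟨P, Q, x, y, ?_, hP2, ?_, hQ2, ?_, ?_, rfl⟩
    · intro a ha
      exact mem_sdiff.mpr ⟨hP ha, hsub a (mem_union_left _ (mem_union_left _ ha))⟩
    · intro a ha
      exact mem_sdiff.mpr ⟨hQ ha, hsub a (mem_union_left _ (mem_union_right _ ha))⟩
    · exact mem_sdiff.mpr ⟨hx, hsub x (mem_union_right _ (mem_insert_self _ _))⟩
    · exact mem_sdiff.mpr ⟨hy, hsub y (mem_union_right _ (mem_insert_of_mem (mem_singleton_self _)))⟩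

lemma W_erase (k' : ℕ) :
    ∀ (L : List ℕ) (i : ℕ), i < L.length → ∀ a₁ a₂ a₃ b : ℕ,
    W k' L a₁ a₂ a₃ b
      = npat k' (L.getD i 0) a₁ a₂ a₃ b *
        W k' (L.eraseIdx i) (redA (L.getD i 0) 0 a₁) (redA (L.getD i 0) 1 a₂)
          (redA (L.getD i 0) 2 a₃) (b - k') := by
  intro L
  induction L with
  | nil => intro i hi; simp at hi
  | cons τ L' IH =>
    intro i hi a₁ a₂ a₃ b
    match i with
    | 0 =>
      simp only [List.getD_cons_zero, List.eraseIdx_cons_zero]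
      rfl
    | (j+1) =>
      have hj : j < L'.length := by simpa using hi
      simp only [List.getD_cons_succ, List.eraseIdx_cons_succ]
      set σ := L'.getD j 0 with hσ
      rw [W, IH j hj, W]
      rw [← mul_assoc, ← mul_assoc, npat_exchange,
        redA_comm σ τ 0 a₁, redA_comm σ τ 1 a₂, redA_comm σ τ 2 a₃]
      try rw [mul_assoc]
      try ring

lemma W_pos (k' : ℕ) :
    ∀ (L : List ℕ) (a₁ a₂ a₃ b : ℕ),
      (L.length + L.count 0 ≤ a₁) → (L.length + L.count 1 ≤ a₂) →
      (L.length + L.count 2 ≤ a₃) → (L.length * k' ≤ b) →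
      (∀ τ ∈ L, τ ≤ 2) →
      0 < W k' L a₁ a₂ a₃ b := by
  intro L
  induction L with
  | nil => intro a₁ a₂ a₃ b _ _ _ _ _; exact Nat.one_pos
  | cons τ L' IH =>
    intro a₁ a₂ a₃ b h1 h2 h3 hb hL
    have hτ2 : τ ≤ 2 := hL τ List.mem_cons_self
    have hlen : (τ :: L').length = L'.length + 1 := rfl
    have hbk : k' ≤ b := by
      have : (L'.length + 1) * k' = L'.length * k' + k' := by ring
      rw [hlen, this] at hb; omega
    have hcount : ∀ i : ℕ, (τ :: L').count i = L'.count i + (if τ = i then 1 else 0) := by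
      intro i
      rw [List.count_cons]
      simp only [beq_iff_eq]
    rw [W]
    apply Nat.mul_pos
    · -- npat positive
      have hbpos : 0 < Nat.choose b k' := Nat.choose_pos hbk
      have h1' := hcount 0 ▸ h1
      have h2' := hcount 1 ▸ h2
      have h3' := hcount 2 ▸ h3
      unfold npat
      split
      · rename_i h0
        subst h0
        have ha₁ : 2 ≤ a₁ := by rw [hlen] at h1'; simp at h1'; omega
        have : 0 < Nat.choose a₁ 2 := Nat.choose_pos ha₁
        have ha₂ : 0 < a₂ := by rw [hlen] at h2'; omega
        have ha₃ : 0 < a₃ := by rw [hlen] at h3'; omega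
        positivity
      · split
        · rename_i h0 h1''
          subst h1''
          have ha₂ : 2 ≤ a₂ := by rw [hlen] at h2'; simp at h2'; omega
          have : 0 < Nat.choose a₂ 2 := Nat.choose_pos ha₂
          have ha₁ : 0 < a₁ := by rw [hlen] at h1'; omega
          have ha₃ : 0 < a₃ := by rw [hlen] at h3'; omega
          positivity
        · rename_i h0 h1''
          have hτ : τ = 2 := by omega
          subst hτ
          have ha₃ : 2 ≤ a₃ := by rw [hlen] at h3'; simp at h3'; omega
          have : 0 < Nat.choose a₃ 2 := Nat.choose_pos ha₃
          have ha₁ : 0 < a₁ := by rw [hlen] at h1'; omega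
          have ha₂ : 0 < a₂ := by rw [hlen] at h2'; omega
          positivity
    · apply IH
      · have h1' := hcount 0 ▸ h1
        rw [hlen] at h1'
        unfold redA
        split <;> rename_i hsp
        · have : min τ 2 = 0 := by simpa using hsp
          have : τ = 0 := by omega
          subst this; simp at h1'; omega
        · have : τ ≠ 0 := by
            intro hc; subst hc; simp at hsp
          omega
      · have h2' := hcount 1 ▸ h2
        rw [hlen] at h2'
        unfold redA
        split <;> rename_i hsp
        · have : min τ 2 = 1 := by simpa using hsp
          have : τ = 1 := by omega
          subst this; simp at h2'; omega
        · have : τ ≠ 1 := by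
            intro hc; subst hc; simp at hsp
          omega
      · have h3' := hcount 2 ▸ h3
        rw [hlen] at h3'
        unfold redA
        split <;> rename_i hsp
        · have : min τ 2 = 2 := by simpa using hsp
          have : τ = 2 := by omega
          subst this; simp at h3'; omega
        · have : τ ≠ 2 := by
            intro hc; subst hc; simp at hsp
          omega
      · have : (L'.length + 1) * k' = L'.length * k' + k' := by ring
        rw [hlen, this] at hb; omega
      · intro σ hσ; exact hL σ (List.mem_cons_of_mem _ hσ)
section patlevel

variable {α : Type*} [DecidableEq α]

def pat (k' τ : ℕ) (A₁ A₂ A₃ B : Finset α) : Finset (Finset α) :=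
  if τ = 0 then patAux k' A₁ A₂ A₃ B
  else if τ = 1 then patAux k' A₂ A₁ A₃ B
  else patAux k' A₃ A₁ A₂ B

variable {k' τ : ℕ} {A₁ A₂ A₃ B : Finset α}

lemma card_pat (h12 : Disjoint A₁ A₂) (h13 : Disjoint A₁ A₃) (h1B : Disjoint A₁ B)
    (h23 : Disjoint A₂ A₃) (h2B : Disjoint A₂ B) (h3B : Disjoint A₃ B) :
    (pat k' τ A₁ A₂ A₃ B).card = npat k' τ A₁.card A₂.card A₃.card B.card := by
  unfold pat npat
  split
  · rw [card_patAux h12 h13 h1B h23 h2B h3B]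
  · split
    · rw [card_patAux h12.symm h23 h2B h13 h1B h3B]
    · rw [card_patAux h13.symm h23.symm h3B h12 h1B h2B]

lemma pat_sdiff (Y : Finset α) :
    pat k' τ (A₁ \ Y) (A₂ \ Y) (A₃ \ Y) (B \ Y) =
      (pat k' τ A₁ A₂ A₃ B).filter (fun X => Disjoint Y X) := by
  unfold pat
  split
  · exact patAux_sdiff Y
  · split
    · exact patAux_sdiff Y
    · exact patAux_sdiff Y

lemma pat_sdiff_cards (h12 : Disjoint A₁ A₂) (h13 : Disjoint A₁ A₃) (h1B : Disjoint A₁ B)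
    (h23 : Disjoint A₂ A₃) (h2B : Disjoint A₂ B) (h3B : Disjoint A₃ B)
    {X : Finset α} (hX : X ∈ pat k' τ A₁ A₂ A₃ B) :
    (A₁ \ X).card = redA τ 0 A₁.card ∧ (A₂ \ X).card = redA τ 1 A₂.card ∧
      (A₃ \ X).card = redA τ 2 A₃.card ∧ (B \ X).card = B.card - k' := by
  have hgen : ∀ (S : Finset α) (c : ℕ), (X ∩ S).card = c → (S \ X).card = S.card - c := by
    intro S c hc
    have h1 : (S \ X).card + (S ∩ X).card = S.card := by
      rw [Finset.card_sdiff_add_card_inter]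
    rw [Finset.inter_comm] at hc
    omega
  by_cases h0 : τ = 0
  · subst h0
    rw [pat, if_pos rfl] at hX
    obtain ⟨e1, e2, e3, e4⟩ := patAux_inter_cards h12 h13 h1B h23 h2B h3B hX
    refine ⟨?_, ?_, ?_, ?_⟩
    · rw [hgen A₁ 2 e1]; norm_num [redA]
    · rw [hgen A₂ 1 e3]; norm_num [redA]
    · rw [hgen A₃ 1 e4]; norm_num [redA]
    · exact hgen B k' e2
  by_cases h1 : τ = 1
  · subst h1
    rw [pat, if_neg (by omega), if_pos rfl] at hX
    obtain ⟨e1, e2, e3, e4⟩ := patAux_inter_cards h12.symm h23 h2B h13 h1B h3B hX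
    refine ⟨?_, ?_, ?_, ?_⟩
    · rw [hgen A₁ 1 e3]; norm_num [redA]
    · rw [hgen A₂ 2 e1]; norm_num [redA]
    · rw [hgen A₃ 1 e4]; norm_num [redA]
    · exact hgen B k' e2
  · rw [pat, if_neg h0, if_neg h1] at hX
    have hm : min τ 2 = 2 := by omega
    obtain ⟨e1, e2, e3, e4⟩ := patAux_inter_cards h13.symm h23.symm h3B h12 h1B h2B hX
    refine ⟨?_, ?_, ?_, ?_⟩
    · rw [hgen A₁ 1 e3]; simp [redA, hm]
    · rw [hgen A₂ 1 e4]; simp [redA, hm]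
    · rw [hgen A₃ 2 e1]; simp [redA, hm]
    · exact hgen B k' e2

end patlevel
section mainind

variable {α : Type*} [DecidableEq α]

lemma main_star (k' : ℕ) (F : Finset (Finset α))
    (hint : ∀ X ∈ F, ∀ Y ∈ F, (X ∩ Y).Nonempty) :
    ∀ (L : List ℕ) (A₁ A₂ A₃ B : Finset α),
      Disjoint A₁ A₂ → Disjoint A₁ A₃ → Disjoint A₁ B →
      Disjoint A₂ A₃ → Disjoint A₂ B → Disjoint A₃ B →
      ∑ i ∈ Finset.range L.length,
        (F.filter (· ∈ pat k' (L.getD i 0) A₁ A₂ A₃ B)).card *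
          W k' (L.eraseIdx i) (redA (L.getD i 0) 0 A₁.card) (redA (L.getD i 0) 1 A₂.card)
            (redA (L.getD i 0) 2 A₃.card) (B.card - k')
      ≤ W k' L A₁.card A₂.card A₃.card B.card := by
  intro L
  induction L with
  | nil => intro A₁ A₂ A₃ B _ _ _ _ _ _; simp
  | cons τ L' IH =>
    intro A₁ A₂ A₃ B h12 h13 h1B h23 h2B h3B
    simp only [List.length_cons]
    rw [Finset.sum_range_succ']
    simp only [List.getD_cons_succ, List.getD_cons_zero, List.eraseIdx_cons_succ,
      List.eraseIdx_cons_zero]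
    -- notation
    set P₀ := pat k' τ A₁ A₂ A₃ B with hP₀
    set n₀ := (F.filter (· ∈ P₀)).card with hn₀
    set w := W k' L' (redA τ 0 A₁.card) (redA τ 1 A₂.card) (redA τ 2 A₃.card)
      (B.card - k') with hw
    -- the key per-j identity
    have hkey : ∀ j ∈ Finset.range L'.length,
        (F.filter (· ∈ pat k' (L'.getD j 0) A₁ A₂ A₃ B)).card *
          W k' (τ :: L'.eraseIdx j) (redA (L'.getD j 0) 0 A₁.card)
            (redA (L'.getD j 0) 1 A₂.card) (redA (L'.getD j 0) 2 A₃.card) (B.card - k')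
        = ∑ X ∈ P₀ \ F,
            (F.filter (· ∈ pat k' (L'.getD j 0) (A₁ \ X) (A₂ \ X) (A₃ \ X) (B \ X))).card *
              W k' (L'.eraseIdx j) (redA (L'.getD j 0) 0 (A₁ \ X).card)
                (redA (L'.getD j 0) 1 (A₂ \ X).card) (redA (L'.getD j 0) 2 (A₃ \ X).card)
                ((B \ X).card - k') := by
      intro j hj
      set σ := L'.getD j 0 with hσ
      -- rewrite the cards of the reduced sets
      have hred : ∀ X ∈ P₀ \ F,
          (F.filter (· ∈ pat k' σ (A₁ \ X) (A₂ \ X) (A₃ \ X) (B \ X))).card *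
            W k' (L'.eraseIdx j) (redA σ 0 (A₁ \ X).card) (redA σ 1 (A₂ \ X).card)
              (redA σ 2 (A₃ \ X).card) ((B \ X).card - k')
          = (F.filter (· ∈ pat k' σ (A₁ \ X) (A₂ \ X) (A₃ \ X) (B \ X))).card *
            W k' (L'.eraseIdx j) (redA σ 0 (redA τ 0 A₁.card)) (redA σ 1 (redA τ 1 A₂.card))
              (redA σ 2 (redA τ 2 A₃.card)) ((B.card - k') - k') := by
        intro X hX
        obtain ⟨c1, c2, c3, c4⟩ :=
          pat_sdiff_cards h12 h13 h1B h23 h2B h3B (Finset.mem_sdiff.mp hX).1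
        rw [c1, c2, c3, c4]
      rw [Finset.sum_congr rfl hred, ← Finset.sum_mul]
      -- the double-counting identity
      have hsw : ∑ X ∈ P₀ \ F,
          (F.filter (· ∈ pat k' σ (A₁ \ X) (A₂ \ X) (A₃ \ X) (B \ X))).card
          = (F.filter (· ∈ pat k' σ A₁ A₂ A₃ B)).card *
              npat k' τ (redA σ 0 A₁.card) (redA σ 1 A₂.card) (redA σ 2 A₃.card)
                (B.card - k') := by
        have step1 : ∀ X ∈ P₀ \ F,
            (F.filter (· ∈ pat k' σ (A₁ \ X) (A₂ \ X) (A₃ \ X) (B \ X))).card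
            = ∑ Y ∈ F.filter (· ∈ pat k' σ A₁ A₂ A₃ B), (if Disjoint X Y then 1 else 0) := by
          intro X hX
          rw [pat_sdiff]
          have : F.filter (· ∈ (pat k' σ A₁ A₂ A₃ B).filter (fun Y => Disjoint X Y))
              = (F.filter (· ∈ pat k' σ A₁ A₂ A₃ B)).filter (fun Y => Disjoint X Y) := by
            ext Y
            simp only [Finset.mem_filter]
            tauto
          rw [this, Finset.card_filter]
        rw [Finset.sum_congr rfl step1, Finset.sum_comm]
        have step2 : ∀ Y ∈ F.filter (· ∈ pat k' σ A₁ A₂ A₃ B),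
            (∑ X ∈ P₀ \ F, if Disjoint X Y then (1:ℕ) else 0)
            = npat k' τ (redA σ 0 A₁.card) (redA σ 1 A₂.card) (redA σ 2 A₃.card)
                (B.card - k') := by
          intro Y hY
          obtain ⟨hYF, hYp⟩ := Finset.mem_filter.mp hY
          rw [← Finset.card_filter]
          have hset : (P₀ \ F).filter (fun X => Disjoint X Y)
              = pat k' τ (A₁ \ Y) (A₂ \ Y) (A₃ \ Y) (B \ Y) := by
            rw [pat_sdiff]
            ext X
            simp only [Finset.mem_filter, Finset.mem_sdiff, hP₀]
            constructor
            · rintro ⟨⟨hXP, _⟩, hd⟩; exact ⟨hXP, hd.symm⟩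
            · rintro ⟨hXP, hd⟩
              refine ⟨⟨hXP, fun hXF => ?_⟩, hd.symm⟩
              have hne := hint X hXF Y hYF
              rw [Finset.disjoint_iff_inter_eq_empty, Finset.inter_comm] at hd
              exact hne.ne_empty hd
          rw [hset, card_pat (h12.mono Finset.sdiff_subset Finset.sdiff_subset)
            (h13.mono Finset.sdiff_subset Finset.sdiff_subset)
            (h1B.mono Finset.sdiff_subset Finset.sdiff_subset)
            (h23.mono Finset.sdiff_subset Finset.sdiff_subset)
            (h2B.mono Finset.sdiff_subset Finset.sdiff_subset)
            (h3B.mono Finset.sdiff_subset Finset.sdiff_subset)]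
          obtain ⟨c1, c2, c3, c4⟩ := pat_sdiff_cards h12 h13 h1B h23 h2B h3B hYp
          rw [c1, c2, c3, c4]
        rw [Finset.sum_congr rfl step2, Finset.sum_const, smul_eq_mul]
      rw [hsw]
      -- now pure arithmetic: expand W on the cons list
      rw [W]
      rw [redA_comm σ τ 0, redA_comm σ τ 1, redA_comm σ τ 2]
      ring
    rw [Finset.sum_congr rfl hkey, Finset.sum_comm]
    -- apply the inductive hypothesis for each X
    have hIH : ∀ X ∈ P₀ \ F,
        ∑ j ∈ Finset.range L'.length,
          (F.filter (· ∈ pat k' (L'.getD j 0) (A₁ \ X) (A₂ \ X) (A₃ \ X) (B \ X))).card *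
            W k' (L'.eraseIdx j) (redA (L'.getD j 0) 0 (A₁ \ X).card)
              (redA (L'.getD j 0) 1 (A₂ \ X).card) (redA (L'.getD j 0) 2 (A₃ \ X).card)
              ((B \ X).card - k')
        ≤ w := by
      intro X hX
      have hXP := (Finset.mem_sdiff.mp hX).1
      obtain ⟨c1, c2, c3, c4⟩ := pat_sdiff_cards h12 h13 h1B h23 h2B h3B hXP
      have := IH (A₁ \ X) (A₂ \ X) (A₃ \ X) (B \ X)
        (h12.mono Finset.sdiff_subset Finset.sdiff_subset)
        (h13.mono Finset.sdiff_subset Finset.sdiff_subset)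
        (h1B.mono Finset.sdiff_subset Finset.sdiff_subset)
        (h23.mono Finset.sdiff_subset Finset.sdiff_subset)
        (h2B.mono Finset.sdiff_subset Finset.sdiff_subset)
        (h3B.mono Finset.sdiff_subset Finset.sdiff_subset)
      rw [c1, c2, c3, c4] at this ⊢
      rwa [← hw] at this
    calc (∑ X ∈ P₀ \ F, ∑ j ∈ Finset.range L'.length,
            (F.filter (· ∈ pat k' (L'.getD j 0) (A₁ \ X) (A₂ \ X) (A₃ \ X) (B \ X))).card *
              W k' (L'.eraseIdx j) (redA (L'.getD j 0) 0 (A₁ \ X).card)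
                (redA (L'.getD j 0) 1 (A₂ \ X).card) (redA (L'.getD j 0) 2 (A₃ \ X).card)
                ((B \ X).card - k')) + n₀ * w
        ≤ (∑ _X ∈ P₀ \ F, w) + n₀ * w := by
          gcongr with X hX
          exact hIH X hX
      _ = (P₀ \ F).card * w + n₀ * w := by rw [Finset.sum_const, smul_eq_mul]
      _ ≤ P₀.card * w := by
          have h1 : (P₀ \ F).card + (P₀ ∩ F).card = P₀.card :=
            Finset.card_sdiff_add_card_inter P₀ F
          have h2 : n₀ = (P₀ ∩ F).card := by
            rw [hn₀, Finset.filter_mem_eq_inter, Finset.inter_comm]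
          nlinarith [h1, h2]
      _ = W k' (τ :: L') A₁.card A₂.card A₃.card B.card := by
          rw [W, card_pat h12 h13 h1B h23 h2B h3B]
  
end mainind
-- helper: sums over getD
lemma sum_getD (g : ℕ → ℕ) :
    ∀ (L : List ℕ), ∑ i ∈ Finset.range L.length, g (L.getD i 0) = (L.map g).sum := by
  intro L
  induction L with
  | nil => simp
  | cons τ L' IH =>
    simp only [List.length_cons]
    rw [Finset.sum_range_succ']
    simp only [List.getD_cons_succ, List.getD_cons_zero, List.map_cons, List.sum_cons, IH]
    omega

/-- In the proof of Theorem 1.3: the members of `F` meeting `T₁ ∪ T₂ ∪ T₃` in exactly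
`4` elements number at most `3(ℓ-1)ℓ² · C(m-3ℓ, k-4)`. -/
theorem F_four_bound (k l m : ℕ) (hk : 4 ≤ k) (hl : 4 ≤ l) (hm : k * l ≤ m)
    (T1 T2 T3 : Finset (Fin m))
    (hT1 : T1.card = l) (hT2 : T2.card = l) (hT3 : T3.card = l)
    (h12 : Disjoint T1 T2) (h13 : Disjoint T1 T3) (h23 : Disjoint T2 T3)
    (F : Finset (Finset (Fin m)))
    (huniform : ∀ A ∈ F, A.card = k)
    (hintersecting : ∀ A ∈ F, ∀ B ∈ F, (A ∩ B).Nonempty)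
    (hmeet : ∀ A ∈ F, (A ∩ T1).Nonempty ∧ (A ∩ T2).Nonempty ∧ (A ∩ T3).Nonempty) :
    (F.filter (fun A => (A ∩ (T1 ∪ T2 ∪ T3)).card = 4)).card ≤
      3 * (l - 1) * l ^ 2 * Nat.choose (m - 3 * l) (k - 4) := by
  classical
  set k' : ℕ := k - 4 with hk'
  set U : Finset (Fin m) := T1 ∪ T2 ∪ T3 with hU
  set O : Finset (Fin m) := Finset.univ \ U with hOdef
  -- card facts
  have hUcard : U.card = 3 * l := by
    rw [hU, Finset.card_union_of_disjoint (by
        rw [Finset.disjoint_union_left]; exact ⟨h13, h23⟩),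
      Finset.card_union_of_disjoint h12, hT1, hT2, hT3]
    ring
  have hOcard : O.card = m - 3 * l := by
    rw [hOdef, Finset.card_sdiff_of_subset (Finset.subset_univ U), hUcard]
    simp
  -- disjointness with O
  have hdisO : ∀ S : Finset (Fin m), S ⊆ U → Disjoint S O := by
    intro S hS
    rw [Finset.disjoint_left]
    intro a haS haO
    exact (Finset.mem_sdiff.mp haO).2 (hS haS)
  have h1O : Disjoint T1 O := hdisO T1 (by intro a ha; simp [hU, ha])
  have h2O : Disjoint T2 O := hdisO T2 (by intro a ha; simp [hU, ha])
  have h3O : Disjoint T3 O := hdisO T3 (by intro a ha; simp [hU, ha])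
  -- every member of F4 is in some pat
  have hmem : ∀ X ∈ F, (X ∩ U).card = 4 →
      X ∈ pat k' 0 T1 T2 T3 O ∨ X ∈ pat k' 1 T1 T2 T3 O ∨ X ∈ pat k' 2 T1 T2 T3 O := by
    intro X hXF hX4
    obtain ⟨hm1, hm2, hm3⟩ := hmeet X hXF
    have hc1 : 1 ≤ (X ∩ T1).card := Finset.card_pos.mpr hm1
    have hc2 : 1 ≤ (X ∩ T2).card := Finset.card_pos.mpr hm2
    have hc3 : 1 ≤ (X ∩ T3).card := Finset.card_pos.mpr hm3
    have hXU : X ∩ U = ((X ∩ T1) ∪ (X ∩ T2)) ∪ (X ∩ T3) := by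
      rw [hU, Finset.inter_union_distrib_left, Finset.inter_union_distrib_left]
    have hsum : (X ∩ T1).card + (X ∩ T2).card + (X ∩ T3).card = 4 := by
      rw [hXU] at hX4
      rw [Finset.card_union_of_disjoint (by
          rw [Finset.disjoint_union_left]
          exact ⟨h13.mono Finset.inter_subset_right Finset.inter_subset_right,
            h23.mono Finset.inter_subset_right Finset.inter_subset_right⟩),
        Finset.card_union_of_disjoint
          (h12.mono Finset.inter_subset_right Finset.inter_subset_right)] at hX4
      omega
    -- X ∩ O facts
    have hXO : X ∩ O = X \ U := by
      ext a
      simp [hOdef, Finset.mem_sdiff]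
    have hXOcard : (X ∩ O).card = k' := by
      rw [hXO]
      have := Finset.card_sdiff_add_card_inter X U
      rw [Finset.inter_comm] at hX4
      rw [← Finset.inter_comm X U] at hX4
      have hXcard := huniform X hXF
      omega
    have hXdecomp : X = ((X ∩ T1) ∪ (X ∩ T2) ∪ (X ∩ T3)) ∪ (X ∩ O) := by
      ext a
      simp only [Finset.mem_union, Finset.mem_inter]
      constructor
      · intro ha
        by_cases haU : a ∈ U
        · rw [hU] at haU
          simp only [Finset.mem_union] at haU
          tauto
        · right
          exact ⟨ha, Finset.mem_sdiff.mpr ⟨Finset.mem_univ a, haU⟩⟩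
      · tauto
    -- the three cases
    have hbuild : ∀ (D S₁ S₂ : Finset (Fin m)),
        (X ∩ D).card = 2 → (X ∩ S₁).card = 1 → (X ∩ S₂).card = 1 →
        (X ∩ D) ∪ (X ∩ S₁) ∪ (X ∩ S₂) ∪ (X ∩ O) = X →
        X ∈ patAux k' D S₁ S₂ O := by
      intro D S₁ S₂ hD hS₁ hS₂ hdec
      obtain ⟨x, hx⟩ := Finset.card_eq_one.mp hS₁
      obtain ⟨y, hy⟩ := Finset.card_eq_one.mp hS₂
      apply mem_patAux.mpr
      refine ⟨X ∩ D, X ∩ O, x, y, Finset.inter_subset_right, hD,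
        Finset.inter_subset_right, hXOcard, ?_, ?_, ?_⟩
      · have : x ∈ X ∩ S₁ := by rw [hx]; exact Finset.mem_singleton_self x
        exact (Finset.mem_inter.mp this).2
      · have : y ∈ X ∩ S₂ := by rw [hy]; exact Finset.mem_singleton_self y
        exact (Finset.mem_inter.mp this).2
      · conv_lhs => rw [← hdec]
        rw [hx, hy]
        ext a
        simp only [Finset.mem_union, Finset.mem_insert, Finset.mem_singleton]
        tauto
    have h2cases : (X ∩ T1).card = 2 ∨ (X ∩ T2).card = 2 ∨ (X ∩ T3).card = 2 := by omega
    have hdecgen : ∀ D S₁ S₂ : Finset (Fin m),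
        (X ∩ D) ∪ (X ∩ S₁) ∪ (X ∩ S₂) = (X ∩ T1) ∪ (X ∩ T2) ∪ (X ∩ T3) →
        X ∩ D ∪ X ∩ S₁ ∪ X ∩ S₂ ∪ X ∩ O = X := by
      intro D S₁ S₂ hperm
      conv_rhs => rw [hXdecomp]
      rw [hperm]
    rcases h2cases with h2 | h2 | h2
    · left
      rw [pat, if_pos rfl]
      exact hbuild T1 T2 T3 h2 (by omega) (by omega) (hdecgen T1 T2 T3 rfl)
    · right; left
      rw [pat, if_neg (by omega), if_pos rfl]
      refine hbuild T2 T1 T3 h2 (by omega) (by omega) (hdecgen T2 T1 T3 ?_)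
      ext a; simp only [Finset.mem_union]; tauto
    · right; right
      rw [pat, if_neg (by omega), if_neg (by omega)]
      refine hbuild T3 T1 T2 h2 (by omega) (by omega) (hdecgen T3 T1 T2 ?_)
      ext a; simp only [Finset.mem_union]; tauto
  -- abbreviation for the three counts
  have hF4 : (F.filter (fun A => (A ∩ U).card = 4)).card ≤
      (F.filter (· ∈ pat k' 0 T1 T2 T3 O)).card + (F.filter (· ∈ pat k' 1 T1 T2 T3 O)).card +
        (F.filter (· ∈ pat k' 2 T1 T2 T3 O)).card := by
    have hsub : F.filter (fun A => (A ∩ U).card = 4) ⊆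
        ((F.filter (· ∈ pat k' 0 T1 T2 T3 O)) ∪ (F.filter (· ∈ pat k' 1 T1 T2 T3 O))) ∪
          (F.filter (· ∈ pat k' 2 T1 T2 T3 O)) := by
      intro X hX
      obtain ⟨hXF, hX4⟩ := Finset.mem_filter.mp hX
      rcases hmem X hXF hX4 with h | h | h <;>
        simp [Finset.mem_union, Finset.mem_filter, hXF, h]
    calc (F.filter (fun A => (A ∩ U).card = 4)).card
        ≤ (((F.filter (· ∈ pat k' 0 T1 T2 T3 O)) ∪ (F.filter (· ∈ pat k' 1 T1 T2 T3 O))) ∪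
            (F.filter (· ∈ pat k' 2 T1 T2 T3 O))).card := Finset.card_le_card hsub
      _ ≤ ((F.filter (· ∈ pat k' 0 T1 T2 T3 O)) ∪ (F.filter (· ∈ pat k' 1 T1 T2 T3 O))).card +
            (F.filter (· ∈ pat k' 2 T1 T2 T3 O)).card := Finset.card_union_le _ _
      _ ≤ _ := by
          have := Finset.card_union_le (F.filter (· ∈ pat k' 0 T1 T2 T3 O))
            (F.filter (· ∈ pat k' 1 T1 T2 T3 O))
          omega
  -- parameters for the lists
  set Tn : ℕ := (l+1)/2 with hTn
  set t1 : ℕ := (Tn+2)/3 with ht1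
  set t2 : ℕ := (Tn+1)/3 with ht2
  set t3 : ℕ := Tn/3 with ht3
  have htsum : t1 + t2 + t3 = Tn := by omega
  have hTnk' : Tn * k' ≤ m - 3*l := by
    have h1 : l * (k-4) + 3*l ≤ m := by
      have h2 : l * (k-4) + 3*l = l * (k-1) := by
        have : (k-4) + 3 = k-1 := by omega
        rw [← this]; ring
      rw [h2]
      calc l * (k-1) ≤ l * k := Nat.mul_le_mul_left l (by omega)
        _ = k * l := by ring
        _ ≤ m := hm
    have h3 : Tn ≤ l := by omega
    calc Tn * k' ≤ l * k' := Nat.mul_le_mul_right k' h3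
      _ = l * (k-4) := by rw [hk']
      _ ≤ m - 3*l := by omega
  have hnpatall : ∀ τ, npat k' τ l l l (m-3*l)
      = Nat.choose l 2 * Nat.choose (m-3*l) k' * l * l := by
    intro τ
    unfold npat
    split
    · rfl
    · split <;> rfl
  -- the core inequality, for each rotated list
  have hone : ∀ ta tb tc : ℕ, ta + tb + tc = Tn → ta ≤ t1 → tb ≤ t1 → tc ≤ t1 →
      ta * (F.filter (· ∈ pat k' 0 T1 T2 T3 O)).card +
        tb * (F.filter (· ∈ pat k' 1 T1 T2 T3 O)).card +
        tc * (F.filter (· ∈ pat k' 2 T1 T2 T3 O)).card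
      ≤ Nat.choose l 2 * Nat.choose (m-3*l) k' * l * l := by
    intro ta tb tc habc hta htb htc
    set L : List ℕ := List.replicate ta 0 ++ List.replicate tb 1 ++ List.replicate tc 2 with hL
    have hlen : L.length = Tn := by
      simp [hL, List.length_append, List.length_replicate]
      omega
    have hcount0 : L.count 0 = ta := by
      simp [hL, List.count_append, List.count_replicate]
    have hcount1 : L.count 1 = tb := by
      simp [hL, List.count_append, List.count_replicate]
    have hcount2 : L.count 2 = tc := by
      simp [hL, List.count_append, List.count_replicate]
    have hmemL : ∀ τ ∈ L, τ ≤ 2 := by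
      intro τ hτ
      simp [hL, List.mem_append, List.mem_replicate] at hτ
      omega
    have hWpos : 0 < W k' L l l l (m-3*l) := by
      apply W_pos k' L l l l (m-3*l)
      · rw [hlen, hcount0]; omega
      · rw [hlen, hcount1]; omega
      · rw [hlen, hcount2]; omega
      · rw [hlen]; exact hTnk'
      · exact hmemL
    have main := main_star k' F hintersecting L T1 T2 T3 O h12 h13 h1O h23 h2O h3O
    rw [hT1, hT2, hT3, hOcard] at main
    -- multiply by the common factor and cancel
    have hmul : (∑ i ∈ Finset.range L.length,
          (F.filter (· ∈ pat k' (L.getD i 0) T1 T2 T3 O)).card) * W k' L l l l (m-3*l)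
        ≤ (Nat.choose l 2 * Nat.choose (m-3*l) k' * l * l) * W k' L l l l (m-3*l) := by
      rw [Finset.sum_mul]
      have hper : ∀ i ∈ Finset.range L.length,
          (F.filter (· ∈ pat k' (L.getD i 0) T1 T2 T3 O)).card * W k' L l l l (m-3*l)
          = (Nat.choose l 2 * Nat.choose (m-3*l) k' * l * l) *
              ((F.filter (· ∈ pat k' (L.getD i 0) T1 T2 T3 O)).card *
                W k' (L.eraseIdx i) (redA (L.getD i 0) 0 l) (redA (L.getD i 0) 1 l)
                  (redA (L.getD i 0) 2 l) ((m-3*l) - k')) := by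
        intro i hi
        rw [W_erase k' L i (Finset.mem_range.mp hi) l l l (m-3*l), hnpatall]
        ring
      rw [Finset.sum_congr rfl hper, ← Finset.mul_sum]
      exact Nat.mul_le_mul_left _ main
    have hSig : (∑ i ∈ Finset.range L.length,
        (F.filter (· ∈ pat k' (L.getD i 0) T1 T2 T3 O)).card)
        ≤ Nat.choose l 2 * Nat.choose (m-3*l) k' * l * l :=
      Nat.le_of_mul_le_mul_right hmul hWpos
    have hsg := sum_getD (fun τ => (F.filter (· ∈ pat k' τ T1 T2 T3 O)).card) L
    rw [hsg] at hSig
    rw [hL] at hSig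
    simp only [List.map_append, List.map_replicate, List.sum_append, List.sum_replicate,
      smul_eq_mul] at hSig
    omega
  -- apply for the three rotations and add up
  have i1 := hone t1 t2 t3 htsum (le_refl t1) (by omega) (by omega)
  have i2 := hone t3 t1 t2 (by omega) (by omega) (le_refl t1) (by omega)
  have i3 := hone t2 t3 t1 (by omega) (by omega) (by omega) (le_refl t1)
  set c0 := (F.filter (· ∈ pat k' 0 T1 T2 T3 O)).card
  set c1 := (F.filter (· ∈ pat k' 1 T1 T2 T3 O)).card
  set c2 := (F.filter (· ∈ pat k' 2 T1 T2 T3 O)).card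
  set o := Nat.choose l 2 * Nat.choose (m-3*l) k' * l * l with ho
  have hTN : Tn * (c0 + c1 + c2) ≤ 3 * o := by
    have hexp : Tn * (c0 + c1 + c2)
        = (t1*c0 + t2*c1 + t3*c2) + (t3*c0 + t1*c1 + t2*c2) + (t2*c0 + t3*c1 + t1*c2) := by
      rw [← htsum]; ring
    rw [hexp]
    omega
  -- final arithmetic
  have hF4' : (F.filter (fun A => (A ∩ U).card = 4)).card ≤ c0 + c1 + c2 := hF4
  have hstep : (2*Tn) * (F.filter (fun A => (A ∩ U).card = 4)).card
      ≤ (2*Tn) * (3 * (l-1) * l^2 * Nat.choose (m-3*l) k') := by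
    calc (2*Tn) * (F.filter (fun A => (A ∩ U).card = 4)).card
        ≤ (2*Tn) * (c0 + c1 + c2) := Nat.mul_le_mul_left _ hF4'
      _ = 2 * (Tn * (c0 + c1 + c2)) := by ring
      _ ≤ 2 * (3 * o) := Nat.mul_le_mul_left _ hTN
      _ = 3 * (2 * Nat.choose l 2) * Nat.choose (m-3*l) k' * l * l := by rw [ho]; ring
      _ = 3 * (l * (l-1)) * Nat.choose (m-3*l) k' * l * l := by rw [two_mul_choose_two]
      _ = l * (3 * (l-1) * l^2 * Nat.choose (m-3*l) k') := by ring
      _ ≤ (2*Tn) * (3 * (l-1) * l^2 * Nat.choose (m-3*l) k') := by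
          apply Nat.mul_le_mul_right
          omega
  exact Nat.le_of_mul_le_mul_left hstep (by omega)
end

section
/- Let k ≥ 3, ℓ ≥ 4, and m ≥ kℓ be integers, let T₁, T₂, T₃ be three pairwise disjoint ℓ-element subsets of [m], and let F be an intersecting family of k-element subsets of [m] such that every member of F intersects each of T₁, T₂, T₃. Let F₃ = {F ∈ F : |F ∩ (T₁ ∪ T₂ ∪ T₃)| = 3}. Then |F₃| ≤ ℓ² · C(m−3ℓ, k−3). -/
open Finset Equiv


/-- The arc of length `a` starting at `p` in `ZMod n`. -/
def karc (n a : ℕ) (p : ZMod n) : Finset (ZMod n) :=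
  (Finset.range a).image (fun (t : ℕ) => p + (t : ZMod n))

lemma mem_karc {n a : ℕ} {p y : ZMod n} :
    y ∈ karc n a p ↔ ∃ t, t < a ∧ y = p + (t : ZMod n) := by
  simp [karc, Finset.mem_image, eq_comm]

lemma card_karc {n a : ℕ} (hn : 0 < n) (h : a ≤ n) (p : ZMod n) :
    (karc n a p).card = a := by
  haveI : NeZero n := ⟨hn.ne'⟩
  rw [karc, Finset.card_image_of_injOn, Finset.card_range]
  intro s hs t ht hst
  simp only [Finset.mem_coe, Finset.mem_range] at hs ht
  have : ((s : ZMod n)) = (t : ZMod n) := by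
    exact add_left_cancel hst
  have := congrArg ZMod.val this
  rwa [ZMod.val_cast_of_lt (lt_of_lt_of_le hs h),
    ZMod.val_cast_of_lt (lt_of_lt_of_le ht h)] at this

lemma karc_inter {n a : ℕ} {p q : ZMod n}
    (h : ((karc n a p) ∩ (karc n a q)).Nonempty) :
    ∃ s t, s < a ∧ t < a ∧ p + (s : ZMod n) = q + (t : ZMod n) := by
  obtain ⟨y, hy⟩ := h
  rw [Finset.mem_inter, mem_karc, mem_karc] at hy
  obtain ⟨⟨s, hs, hys⟩, ⟨t, ht, hyt⟩⟩ := hy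
  exact ⟨s, t, hs, ht, by rw [← hys, ← hyt]⟩


lemma karc_zero_image_id {n a : ℕ} :
    (karc n a (0 : ZMod n)).image (⇑(Equiv.refl (ZMod n))) = karc n a 0 := by simp

lemma arc_lemma {ι : Type*} [Fintype ι] [DecidableEq ι] {n a : ℕ} (ha : 1 ≤ a)
    (hn3 : 3 * a ≤ n) (hn : Fintype.card ι * a ≤ n)
    (B : ι → Finset (ZMod n))
    (hcross : ∀ i j, i ≠ j → ∀ p ∈ B i, ∀ q ∈ B j,
      ((karc n a p) ∩ (karc n a q)).Nonempty) :
    ∑ i, (B i).card ≤ n := by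
  haveI : NeZero n := ⟨by omega⟩
  set r := Fintype.card ι with hr
  set m : ZMod n → ℕ := fun p => (Finset.univ.filter fun i => p ∈ B i).card with hm
  -- step 0 : rewrite the sum
  have step0 : ∑ i, (B i).card = ∑ p : ZMod n, m p := by
    simp only [hm, Finset.card_filter]
    rw [Finset.sum_comm]
    congr 1
    ext i
    rw [Finset.card_eq_sum_ones]
    rw [Finset.sum_ite_mem]
    simp [Finset.univ_inter]
  rw [step0]
  by_cases hcase : ∀ p, m p ≤ 1
  · calc ∑ p : ZMod n, m p ≤ ∑ _p : ZMod n, 1 := Finset.sum_le_sum fun p _ => hcase p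
    _ = n := by simp [ZMod.card n]
  push_neg at hcase
  obtain ⟨p₀, hp₀⟩ := hcase
  have hp₀' : 2 ≤ m p₀ := hp₀
  -- extraction of two indices
  have hij : ∀ q, 2 ≤ m q → ∃ i j, i ≠ j ∧ q ∈ B i ∧ q ∈ B j := by
    intro q hq
    obtain ⟨i, hi, j, hj, hne⟩ := Finset.one_lt_card.1 hq
    simp only [Finset.mem_filter] at hi hj
    exact ⟨i, j, hne, hi.2, hj.2⟩
  have hone : ∀ q, 1 ≤ m q → ∃ i, q ∈ B i := by
    intro q hq
    obtain ⟨i, hi⟩ := Finset.card_pos.1 hq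
    exact ⟨i, (Finset.mem_filter.1 hi).2⟩
  have meets : ∀ q q', 2 ≤ m q → 1 ≤ m q' →
      ((karc n a q) ∩ (karc n a q')).Nonempty := by
    intro q q' hq hq'
    obtain ⟨i, j, hne, hqi, hqj⟩ := hij q hq
    obtain ⟨k, hk⟩ := hone q' hq'
    by_cases hik : i = k
    · subst hik
      exact hcross j i hne.symm q hqj q' hk
    · exact hcross i k hik q hqi q' hk
  -- the coordinate function
  set c : ZMod n → ℕ := fun q => (q + ((a - 1 : ℕ) : ZMod n) - p₀).val with hc
  have rep : ∀ q : ZMod n, q = p₀ + ((c q : ℕ) : ZMod n) - ((a - 1 : ℕ) : ZMod n) := by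
    intro q
    rw [hc]
    simp only []
    rw [ZMod.natCast_val, ZMod.cast_id]
    ring
  have cbound : ∀ q, 1 ≤ m q → c q ≤ 2 * a - 2 := by
    intro q hq
    obtain ⟨s, t, hs, ht, hst⟩ := karc_inter (meets p₀ q hp₀' hq)
    -- p₀ + s = q + t  →  q + (a-1) - p₀ = (a-1) + s - t
    have key : q + ((a - 1 : ℕ) : ZMod n) - p₀ = (((a - 1) + s - t : ℕ) : ZMod n) := by
      have hts : t ≤ (a - 1) + s := by omega
      push_cast [Nat.cast_sub hts, Nat.cast_sub (by omega : 1 ≤ a)]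
      have : q = p₀ + (s : ZMod n) - (t : ZMod n) := by rw [hst]; ring
      rw [this]; push_cast; ring
    have hlt : (a - 1) + s - t < n := by omega
    rw [hc]
    simp only []
    rw [key, ZMod.val_cast_of_lt hlt]
    omega
  have dist : ∀ q q', c q ≤ 2 * a - 2 → c q' ≤ 2 * a - 2 →
      ((karc n a q) ∩ (karc n a q')).Nonempty → c q' ≤ c q + (a - 1) := by
    intro q q' hq hq' hint
    obtain ⟨s, t, hs, ht, hst⟩ := karc_inter hint
    -- q + s = q' + t with reps
    have : ((c q + s : ℕ) : ZMod n) = ((c q' + t : ℕ) : ZMod n) := by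
      have h1 := rep q
      have h2 := rep q'
      push_cast
      linear_combination hst - h1 + h2
    have h1 : c q + s < n := by omega
    have h2 : c q' + t < n := by omega
    have := congrArg ZMod.val this
    rw [ZMod.val_cast_of_lt h1, ZMod.val_cast_of_lt h2] at this
    omega
  -- the sets U and K
  set U : Finset (ZMod n) := Finset.univ.filter (fun q => 1 ≤ m q) with hU
  set K : Finset (ZMod n) := Finset.univ.filter (fun q => 2 ≤ m q) with hK
  have hKU : K ⊆ U := by
    intro q hq
    simp only [hK, Finset.mem_filter] at hq
    simp only [hU, Finset.mem_filter]
    exact ⟨Finset.mem_univ _, by omega⟩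
  have hp₀K : p₀ ∈ K := by simp [hK, hp₀']
  have hcinj : Set.InjOn c U := by
    intro q hq q' hq' hqq'
    rw [rep q, rep q', hqq']
  -- min and max of c on K
  obtain ⟨q₁, hq₁K, hq₁min⟩ := Finset.exists_min_image K c ⟨p₀, hp₀K⟩
  obtain ⟨q₂, hq₂K, hq₂max⟩ := Finset.exists_max_image K c ⟨p₀, hp₀K⟩
  have hmK : ∀ q ∈ K, 2 ≤ m q := fun q hq => (Finset.mem_filter.1 hq).2
  have hmU : ∀ q ∈ U, 1 ≤ m q := fun q hq => (Finset.mem_filter.1 hq).2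
  have hcK : ∀ q ∈ K, c q ≤ 2 * a - 2 := fun q hq => cbound q (le_trans one_le_two (hmK q hq))
  have hcU : ∀ q ∈ U, c q ≤ 2 * a - 2 := fun q hq => cbound q (hmU q hq)
  have hr2 : 2 ≤ r := by
    obtain ⟨i, j, hne, _, _⟩ := hij p₀ hp₀'
    exact Fintype.one_lt_card_iff.2 ⟨i, j, hne⟩
  have hd12 : c q₂ ≤ c q₁ + (a - 1) :=
    dist q₁ q₂ (hcK _ hq₁K) (hcK _ hq₂K)
      (meets q₁ q₂ (hmK _ hq₁K) (le_trans one_le_two (hmK _ hq₂K)))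
  have hq1le : ∀ q ∈ U, c q ≤ c q₁ + (a - 1) := fun q hq =>
    dist q₁ q (hcK _ hq₁K) (hcU _ hq)
      (meets q₁ q (hmK _ hq₁K) (hmU _ hq))
  have hq2ge : ∀ q ∈ U, c q₂ ≤ c q + (a - 1) := fun q hq => by
    refine dist q q₂ (hcU _ hq) (hcK _ hq₂K) ?_
    rw [Finset.inter_comm]
    exact meets q₂ q (hmK _ hq₂K) (hmU _ hq)
  have hxy : c q₁ ≤ c q₂ := hq₁min q₂ hq₂K
  -- cardinality bounds
  have hKcard : K.card + c q₁ ≤ c q₂ + 1 := by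
    have h1 : K.card = (K.image c).card :=
      (Finset.card_image_of_injOn (hcinj.mono (by exact_mod_cast hKU))).symm
    have h2 : K.image c ⊆ Finset.Icc (c q₁) (c q₂) := by
      intro x hx
      obtain ⟨q, hq, rfl⟩ := Finset.mem_image.1 hx
      exact Finset.mem_Icc.2 ⟨hq₁min q hq, hq₂max q hq⟩
    have h3 := Finset.card_le_card h2
    rw [Nat.card_Icc] at h3
    omega
  have hUcard : U.card + c q₂ + 1 ≤ c q₁ + 2 * a := by
    have h1 : U.card = (U.image c).card :=
      (Finset.card_image_of_injOn hcinj).symm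
    have h2 : U.image c ⊆ Finset.Icc (c q₂ - (a - 1)) (c q₁ + (a - 1)) := by
      intro x hx
      obtain ⟨q, hq, rfl⟩ := Finset.mem_image.1 hx
      refine Finset.mem_Icc.2 ⟨?_, hq1le q hq⟩
      have := hq2ge q hq
      omega
    have h3 := Finset.card_le_card h2
    rw [Nat.card_Icc] at h3
    omega
  -- summing up
  have hsum1 : ∑ p : ZMod n, m p = ∑ p ∈ U, m p := by
    refine (Finset.sum_subset (Finset.subset_univ U) ?_).symm
    intro x _ hx
    simp only [hU, Finset.mem_filter, Finset.mem_univ, true_and] at hx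
    omega
  have hsum2 : ∑ p ∈ U, m p = ∑ p ∈ U \ K, m p + ∑ p ∈ K, m p :=
    (Finset.sum_sdiff hKU).symm
  have hmr : ∀ q, m q ≤ r := by
    intro q
    calc m q ≤ Finset.univ.card := Finset.card_filter_le _ _
    _ = r := Finset.card_univ
  have hsum3 : ∑ p ∈ K, m p ≤ K.card * r :=
    Finset.sum_le_card_nsmul _ _ _ (fun q _ => hmr q)
  have hsum4 : ∑ p ∈ U \ K, m p ≤ (U.card - K.card) * 1 := by
    rw [← Finset.card_sdiff_of_subset hKU]
    refine Finset.sum_le_card_nsmul _ _ _ ?_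
    intro q hq
    rw [Finset.mem_sdiff] at hq
    have h1 : q ∉ K := hq.2
    simp only [hK, Finset.mem_filter, Finset.mem_univ, true_and] at h1
    omega
  have hK1 : 1 ≤ K.card := Finset.card_pos.2 ⟨p₀, hp₀K⟩
  have hKUcard : K.card ≤ U.card := Finset.card_le_card hKU
  have harith : (U.card - K.card) * 1 + K.card * r ≤ r * a := by
    have h1 : K.card ≤ U.card := hKUcard
    zify [h1]
    nlinarith [mul_nonneg (by exact_mod_cast Nat.zero_le (r - 2) : (0:ℤ) ≤ (r:ℤ) - 2)
        (by push_cast; omega : (0:ℤ) ≤ ((c q₁ : ℤ) + a) - ((c q₂ : ℤ) + 1)),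
      mul_nonneg (by push_cast; omega : (0:ℤ) ≤ (r:ℤ) - 1)
        (by push_cast; omega : (0:ℤ) ≤ ((c q₂ : ℤ) + 1 - (c q₁ : ℤ)) - K.card)]
  calc ∑ p : ZMod n, m p = ∑ p ∈ U \ K, m p + ∑ p ∈ K, m p := by rw [hsum1, hsum2]
  _ ≤ (U.card - K.card) * 1 + K.card * r := Nat.add_le_add hsum4 hsum3
  _ ≤ r * a := harith
  _ ≤ n := hn

lemma exists_perm_finset_image {β : Type*} [Fintype β] [DecidableEq β] {S A : Finset β}
    (h : S.card = A.card) : ∃ σ : Equiv.Perm β, S.image σ = A := by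
  have hc : Sᶜ.card = Aᶜ.card := by
    rw [Finset.card_compl, Finset.card_compl, h]
  let e₁ : {x // x ∈ S} ≃ {x // x ∈ A} := Finset.equivOfCardEq h
  let e₂' : {x // x ∈ Sᶜ} ≃ {x // x ∈ Aᶜ} := Finset.equivOfCardEq hc
  let e₂ : {x // ¬ x ∈ S} ≃ {x // ¬ x ∈ A} :=
    (Equiv.subtypeEquivRight (fun x => by simp)).trans
      (e₂'.trans (Equiv.subtypeEquivRight (fun x => by simp)))
  let σ : Equiv.Perm β :=
    (Equiv.sumCompl (· ∈ S)).symm.trans ((e₁.sumCongr e₂).trans (Equiv.sumCompl (· ∈ A)))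
  refine ⟨σ, ?_⟩
  have hsub : S.image σ ⊆ A := by
    intro y hy
    obtain ⟨x, hx, rfl⟩ := Finset.mem_image.1 hy
    have : σ x = (e₁ ⟨x, hx⟩ : β) := by
      simp only [σ, Equiv.trans_apply, Equiv.sumCompl_symm_apply_of_pos (p := (· ∈ S)) hx,
        Equiv.sumCongr_apply, Sum.map_inl, Equiv.sumCompl_apply_inl]
    rw [this]
    exact (e₁ ⟨x, hx⟩).2
  refine Finset.eq_of_subset_of_card_le hsub ?_
  rw [Finset.card_image_of_injective _ σ.injective, h]

lemma fiber_card_eq {n a : ℕ} [NeZero n] {A A' : Finset (ZMod n)}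
    (hA : A.card = a) (hA' : A'.card = a) :
    ((Finset.univ ×ˢ Finset.univ : Finset (Equiv.Perm (ZMod n) × ZMod n)).filter
        (fun σp => (karc n a σp.2).image σp.1 = A)).card =
    ((Finset.univ ×ˢ Finset.univ : Finset (Equiv.Perm (ZMod n) × ZMod n)).filter
        (fun σp => (karc n a σp.2).image σp.1 = A')).card := by
  obtain ⟨τ, hτ⟩ := exists_perm_finset_image (show A.card = A'.card by rw [hA, hA'])
  have hτ' : A'.image τ.symm = A := by
    rw [← hτ, Finset.image_image]
    simp
  refine Finset.card_bij' (fun σp _ => (σp.1.trans τ, σp.2))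
    (fun σp _ => (σp.1.trans τ.symm, σp.2)) ?_ ?_ ?_ ?_
  · intro σp hσp
    simp only [Finset.mem_filter, Finset.mem_product, Finset.mem_univ, true_and] at hσp ⊢
    show (karc n a σp.2).image (fun x => τ (σp.1 x)) = A'
    rw [show (fun x => τ (σp.1 x)) = (⇑τ ∘ ⇑σp.1) from rfl, ← Finset.image_image, hσp, hτ]
  · intro σp hσp
    simp only [Finset.mem_filter, Finset.mem_product, Finset.mem_univ, true_and] at hσp ⊢
    show (karc n a σp.2).image (fun x => τ.symm (σp.1 x)) = A
    rw [show (fun x => τ.symm (σp.1 x)) = (⇑τ.symm ∘ ⇑σp.1) from rfl, ← Finset.image_image, hσp, hτ']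
  · intro σp _
    ext x <;> simp
  · intro σp _
    ext x <;> simp

lemma hilton_zmod {ι : Type*} [Fintype ι] [DecidableEq ι] {n a : ℕ} (ha : 1 ≤ a)
    (hr : 4 ≤ Fintype.card ι) (hn : Fintype.card ι * a ≤ n)
    (𝒜 : ι → Finset (Finset (ZMod n)))
    (hcard : ∀ i, ∀ A ∈ 𝒜 i, A.card = a)
    (hcross : ∀ i j, i ≠ j → ∀ A ∈ 𝒜 i, ∀ B ∈ 𝒜 j, (A ∩ B).Nonempty) :
    ∑ i, (𝒜 i).card ≤ n.choose a := by
  have h4a : 4 * a ≤ n := le_trans (Nat.mul_le_mul_right a hr) hn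
  haveI : NeZero n := ⟨by omega⟩
  have hn3 : 3 * a ≤ n := by omega
  have han : a ≤ n := by omega
  set P := (Finset.univ ×ˢ Finset.univ : Finset (Equiv.Perm (ZMod n) × ZMod n)) with hP
  set fib : Finset (ZMod n) → ℕ :=
    fun A => (P.filter (fun σp => (karc n a σp.2).image σp.1 = A)).card with hfibdef
  set c₀ := fib (karc n a 0) with hc₀
  have hcarc : ∀ p, (karc n a p).card = a := card_karc (by omega) han
  have hfib : ∀ A : Finset (ZMod n), A.card = a → fib A = c₀ :=
    fun A hA => fiber_card_eq hA (hcarc 0)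
  have hc₀pos : 1 ≤ c₀ := by
    rw [hc₀, hfibdef]
    refine Finset.card_pos.2 ⟨(Equiv.refl _, (0 : ZMod n)), ?_⟩
    rw [Finset.mem_filter]
    exact ⟨Finset.mem_product.2 ⟨Finset.mem_univ _, Finset.mem_univ _⟩, karc_zero_image_id⟩
  have hPcard : P.card = n.factorial * n := by
    rw [hP, Finset.card_product]
    simp [Fintype.card_perm, ZMod.card]
  -- splitting a product filter into a sum over σ
  have hsplit : ∀ (Q : Finset (ZMod n) → Prop) [DecidablePred Q],
      (P.filter (fun σp => Q ((karc n a σp.2).image σp.1))).card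
      = ∑ σ : Equiv.Perm (ZMod n),
          (Finset.univ.filter (fun p : ZMod n => Q ((karc n a p).image σ))).card := by
    intro Q _
    rw [Finset.card_filter, hP, Finset.sum_product]
    refine Finset.sum_congr rfl fun σ _ => ?_
    rw [Finset.card_filter]
  -- per-family count
  have hfam : ∀ i, (P.filter (fun σp => (karc n a σp.2).image σp.1 ∈ 𝒜 i)).card
      = (𝒜 i).card * c₀ := by
    intro i
    rw [Finset.card_eq_sum_card_fiberwise
      (f := fun σp : Equiv.Perm (ZMod n) × ZMod n => (karc n a σp.2).image σp.1)
      (s := P.filter (fun σp => (karc n a σp.2).image σp.1 ∈ 𝒜 i))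
      (t := 𝒜 i) (fun x hx => (Finset.mem_filter.1 hx).2)]
    have : ∀ A ∈ 𝒜 i,
        ((P.filter (fun σp => (karc n a σp.2).image σp.1 ∈ 𝒜 i)).filter
          (fun σp => (karc n a σp.2).image σp.1 = A)).card = c₀ := by
      intro A hA
      rw [Finset.filter_filter]
      have heq : (P.filter fun σp =>
          ((karc n a σp.2).image σp.1 ∈ 𝒜 i) ∧ (karc n a σp.2).image σp.1 = A)
          = P.filter (fun σp => (karc n a σp.2).image σp.1 = A) := by
        refine Finset.filter_congr fun σp _ => ?_
        constructor
        · exact fun h => h.2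
        · exact fun h => ⟨h ▸ hA, h⟩
      rw [heq]
      exact hfib A (hcard i A hA)
    rw [Finset.sum_congr rfl this, Finset.sum_const, smul_eq_mul]
  -- per-σ bound
  have hσ : ∀ σ : Equiv.Perm (ZMod n),
      ∑ i, (Finset.univ.filter
        (fun p : ZMod n => (karc n a p).image σ ∈ 𝒜 i)).card ≤ n := by
    intro σ
    refine arc_lemma ha hn3 hn _ ?_
    intro i j hne p hp q hq
    simp only [Finset.mem_filter] at hp hq
    obtain ⟨y, hy⟩ := hcross i j hne _ hp.2 _ hq.2
    rw [Finset.mem_inter] at hy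
    obtain ⟨x, hx, rfl⟩ := Finset.mem_image.1 hy.1
    obtain ⟨x', hx', hxx'⟩ := Finset.mem_image.1 hy.2
    have hxeq : x' = x := σ.injective hxx'
    exact ⟨x, Finset.mem_inter.2 ⟨hx, hxeq ▸ hx'⟩⟩
  -- assembling
  have key : (∑ i, (𝒜 i).card) * c₀ ≤ n.factorial * n := by
    calc (∑ i, (𝒜 i).card) * c₀ = ∑ i, (𝒜 i).card * c₀ := Finset.sum_mul _ _ _
    _ = ∑ i, (P.filter (fun σp => (karc n a σp.2).image σp.1 ∈ 𝒜 i)).card := by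
        exact Finset.sum_congr rfl fun i _ => (hfam i).symm
    _ = ∑ i, ∑ σ : Equiv.Perm (ZMod n),
          (Finset.univ.filter (fun p : ZMod n => (karc n a p).image σ ∈ 𝒜 i)).card := by
        exact Finset.sum_congr rfl fun i _ => hsplit (fun A => A ∈ 𝒜 i)
    _ = ∑ σ : Equiv.Perm (ZMod n), ∑ i,
          (Finset.univ.filter (fun p : ZMod n => (karc n a p).image σ ∈ 𝒜 i)).card :=
        Finset.sum_comm
    _ ≤ ∑ _σ : Equiv.Perm (ZMod n), n := Finset.sum_le_sum fun σ _ => hσ σ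
    _ = n.factorial * n := by simp [Fintype.card_perm, ZMod.card, mul_comm]
  have total : n.choose a * c₀ = n.factorial * n := by
    have hmem : ∀ σp ∈ P, (karc n a σp.2).image σp.1 ∈ Finset.univ.powersetCard a := by
      intro σp _
      rw [Finset.mem_powersetCard]
      exact ⟨Finset.subset_univ _, by
        rw [Finset.card_image_of_injective _ σp.1.injective, hcarc]⟩
    have hcount := Finset.card_eq_sum_card_fiberwise hmem
    rw [hPcard] at hcount
    rw [hcount]
    have : ∀ A ∈ Finset.univ.powersetCard a,
        (P.filter (fun σp => (karc n a σp.2).image σp.1 = A)).card = c₀ := by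
      intro A hA
      exact hfib A (Finset.mem_powersetCard.1 hA).2
    rw [Finset.sum_congr rfl this, Finset.sum_const, smul_eq_mul,
      Finset.card_powersetCard, Finset.card_univ, ZMod.card]
  rw [← total] at key
  exact Nat.le_of_mul_le_mul_right key (by omega)

lemma hilton {α ι : Type*} [DecidableEq α] [Fintype ι] [DecidableEq ι]
    (X : Finset α) (a : ℕ)
    (hr : 4 ≤ Fintype.card ι) (hn : Fintype.card ι * a ≤ X.card)
    (𝒜 : ι → Finset (Finset α))
    (hsub : ∀ i, ∀ A ∈ 𝒜 i, A ⊆ X) (hcard : ∀ i, ∀ A ∈ 𝒜 i, A.card = a)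
    (hcross : ∀ i j, i ≠ j → ∀ A ∈ 𝒜 i, ∀ B ∈ 𝒜 j, (A ∩ B).Nonempty) :
    ∑ i, (𝒜 i).card ≤ X.card.choose a := by
  rcases Nat.eq_zero_or_pos a with ha0 | ha
  · subst ha0
    rw [Nat.choose_zero_right]
    by_cases hex : ∃ i, (𝒜 i).Nonempty
    · obtain ⟨i₀, A₀, hA₀⟩ := hex
      have hz : ∀ j, j ≠ i₀ → (𝒜 j).card = 0 := by
        intro j hj
        rw [Finset.card_eq_zero]
        by_contra h
        obtain ⟨B, hB⟩ := Finset.nonempty_iff_ne_empty.2 h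
        obtain ⟨y, hy⟩ := hcross j i₀ hj B hB A₀ hA₀
        rw [Finset.mem_inter] at hy
        have hBe : B = ∅ := Finset.card_eq_zero.1 (hcard j B hB)
        rw [hBe] at hy
        exact absurd hy.1 (Finset.notMem_empty y)
      rw [Finset.sum_eq_single_of_mem i₀ (Finset.mem_univ _) (fun j _ hj => hz j hj)]
      have : 𝒜 i₀ ⊆ {∅} := fun A hA =>
        Finset.mem_singleton.2 (Finset.card_eq_zero.1 (hcard i₀ A hA))
      calc (𝒜 i₀).card ≤ ({∅} : Finset (Finset α)).card := Finset.card_le_card this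
      _ = 1 := Finset.card_singleton _
    · push_neg at hex
      have : ∀ i, (𝒜 i).card = 0 := fun i => by
        rw [Finset.card_eq_zero]; exact hex i
      simp [this]
  · set n := X.card with hnX
    have h4a : 4 * a ≤ n := le_trans (Nat.mul_le_mul_right a hr) hn
    haveI : NeZero n := ⟨by omega⟩
    have hcards : Fintype.card {x // x ∈ X} = Fintype.card (ZMod n) := by
      simp [Fintype.card_coe, ZMod.card, hnX]
    let e : {x // x ∈ X} ≃ ZMod n := Fintype.equivOfCardEq hcards
    let f : α → ZMod n := fun x => if h : x ∈ X then e ⟨x, h⟩ else 0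
    have hfinj : Set.InjOn f X := by
      intro x hx y hy hxy
      simp only [Finset.mem_coe] at hx hy
      simp only [f, dif_pos hx, dif_pos hy] at hxy
      have := e.injective hxy
      exact congrArg Subtype.val this
    have himg : ∀ (A B : Finset α), A ⊆ X → B ⊆ X → A.image f = B.image f → A = B := by
      intro A B hAX hBX hAB
      ext x
      constructor
      · intro hx
        have : f x ∈ B.image f := hAB ▸ Finset.mem_image_of_mem f hx
        obtain ⟨y, hy, hyx⟩ := Finset.mem_image.1 this
        rwa [hfinj (hBX hy) (hAX hx) hyx] at hy
      · intro hx
        have : f x ∈ A.image f := hAB ▸ Finset.mem_image_of_mem f hx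
        obtain ⟨y, hy, hyx⟩ := Finset.mem_image.1 this
        rwa [hfinj (hAX hy) (hBX hx) hyx] at hy
    let 𝒜' : ι → Finset (Finset (ZMod n)) := fun i => (𝒜 i).image (fun A => A.image f)
    have hcard' : ∀ i, ∀ A' ∈ 𝒜' i, A'.card = a := by
      intro i A' hA'
      obtain ⟨A, hA, rfl⟩ := Finset.mem_image.1 hA'
      rw [Finset.card_image_of_injOn (hfinj.mono (by exact_mod_cast hsub i A hA))]
      exact hcard i A hA
    have hcross' : ∀ i j, i ≠ j → ∀ A' ∈ 𝒜' i, ∀ B' ∈ 𝒜' j, (A' ∩ B').Nonempty := by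
      intro i j hij A' hA' B' hB'
      obtain ⟨A, hA, rfl⟩ := Finset.mem_image.1 hA'
      obtain ⟨B, hB, rfl⟩ := Finset.mem_image.1 hB'
      obtain ⟨y, hy⟩ := hcross i j hij A hA B hB
      rw [Finset.mem_inter] at hy
      exact ⟨f y, Finset.mem_inter.2
        ⟨Finset.mem_image_of_mem f hy.1, Finset.mem_image_of_mem f hy.2⟩⟩
    have hfamcard : ∀ i, (𝒜' i).card = (𝒜 i).card := by
      intro i
      refine Finset.card_image_of_injOn ?_
      intro A hA B hB hAB
      exact himg A B (hsub i A (by exact_mod_cast hA)) (hsub i B (by exact_mod_cast hB)) hAB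
    calc ∑ i, (𝒜 i).card = ∑ i, (𝒜' i).card := by
          exact (Finset.sum_congr rfl fun i _ => hfamcard i).symm
    _ ≤ n.choose a := hilton_zmod ha hr hn 𝒜' hcard' hcross'

/-- In the proof of Theorem 1.3: the members of `F` meeting `T₁ ∪ T₂ ∪ T₃` in exactly
`3` elements number at most `ℓ² · C(m-3ℓ, k-3)`. -/
theorem F_three_bound (k l m : ℕ) (hk : 3 ≤ k) (hl : 4 ≤ l) (hm : k * l ≤ m)
    (T1 T2 T3 : Finset (Fin m))
    (hT1 : T1.card = l) (hT2 : T2.card = l) (hT3 : T3.card = l)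
    (h12 : Disjoint T1 T2) (h13 : Disjoint T1 T3) (h23 : Disjoint T2 T3)
    (F : Finset (Finset (Fin m)))
    (huniform : ∀ A ∈ F, A.card = k)
    (hintersecting : ∀ A ∈ F, ∀ B ∈ F, (A ∩ B).Nonempty)
    (hmeet : ∀ A ∈ F, (A ∩ T1).Nonempty ∧ (A ∩ T2).Nonempty ∧ (A ∩ T3).Nonempty) :
    (F.filter (fun A => (A ∩ (T1 ∪ T2 ∪ T3)).card = 3)).card ≤
      l ^ 2 * Nat.choose (m - 3 * l) (k - 3) := by
  classical
  have hm0 : 0 < m := by nlinarith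
  haveI : NeZero l := ⟨by omega⟩
  set T : Finset (Fin m) := T1 ∪ T2 ∪ T3 with hT
  set F3 := F.filter (fun A => (A ∩ T).card = 3) with hF3
  -- cardinality of T
  have hd1 : Disjoint T1 (T2 ∪ T3) := Finset.disjoint_union_right.2 ⟨h12, h13⟩
  have hTcard : T.card = 3 * l := by
    rw [hT, Finset.union_assoc, Finset.card_union_of_disjoint hd1,
      Finset.card_union_of_disjoint h23, hT1, hT2, hT3]
    ring
  -- structure of members of F3
  have hstruct : ∀ A ∈ F3, (A ∩ T1).card = 1 ∧ (A ∩ T2).card = 1 ∧ (A ∩ T3).card = 1 := by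
    intro A hA
    rw [hF3, Finset.mem_filter] at hA
    obtain ⟨hAF, hA3⟩ := hA
    obtain ⟨hm1, hm2, hm3⟩ := hmeet A hAF
    have hsplit : A ∩ T = (A ∩ T1) ∪ ((A ∩ T2) ∪ (A ∩ T3)) := by
      rw [hT, Finset.union_assoc, Finset.inter_union_distrib_left,
        Finset.inter_union_distrib_left]
    have hda : Disjoint (A ∩ T1) ((A ∩ T2) ∪ (A ∩ T3)) :=
      Finset.disjoint_of_subset_left Finset.inter_subset_right
        (Finset.disjoint_of_subset_right
          (Finset.union_subset_union Finset.inter_subset_right Finset.inter_subset_right) hd1)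
    have hdb : Disjoint (A ∩ T2) (A ∩ T3) :=
      Finset.disjoint_of_subset_left Finset.inter_subset_right
        (Finset.disjoint_of_subset_right Finset.inter_subset_right h23)
    rw [hsplit, Finset.card_union_of_disjoint hda, Finset.card_union_of_disjoint hdb] at hA3
    have hc1 := Finset.card_pos.2 hm1
    have hc2 := Finset.card_pos.2 hm2
    have hc3 := Finset.card_pos.2 hm3
    omega
  -- selector functions
  set x1 : Finset (Fin m) → Fin m := fun A =>
    if h : (A ∩ T1).Nonempty then (A ∩ T1).min' h else ⟨0, hm0⟩ with hx1def
  set x2 : Finset (Fin m) → Fin m := fun A =>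
    if h : (A ∩ T2).Nonempty then (A ∩ T2).min' h else ⟨0, hm0⟩ with hx2def
  set x3 : Finset (Fin m) → Fin m := fun A =>
    if h : (A ∩ T3).Nonempty then (A ∩ T3).min' h else ⟨0, hm0⟩ with hx3def
  have hsel : ∀ (A : Finset (Fin m)) (Ti : Finset (Fin m)),
      (A ∩ Ti).card = 1 → A ∩ Ti =
        {if h : (A ∩ Ti).Nonempty then (A ∩ Ti).min' h else ⟨0, hm0⟩} := by
    intro A Ti hcard1
    obtain ⟨y, hy⟩ := Finset.card_eq_one.1 hcard1
    have hne : (A ∩ Ti).Nonempty := by rw [hy]; exact ⟨y, Finset.mem_singleton_self y⟩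
    rw [dif_pos hne]
    refine (Finset.eq_of_subset_of_card_le ?_ ?_).symm
    · rw [Finset.singleton_subset_iff]
      exact Finset.min'_mem _ _
    · rw [hcard1, Finset.card_singleton]
  have hA1 : ∀ A ∈ F3, A ∩ T1 = {x1 A} := fun A hA => hsel A T1 (hstruct A hA).1
  have hA2 : ∀ A ∈ F3, A ∩ T2 = {x2 A} := fun A hA => hsel A T2 (hstruct A hA).2.1
  have hA3 : ∀ A ∈ F3, A ∩ T3 = {x3 A} := fun A hA => hsel A T3 (hstruct A hA).2.2
  have hx1T : ∀ A ∈ F3, x1 A ∈ T1 ∧ x1 A ∈ A := by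
    intro A hA
    have := hA1 A hA
    have hmem : x1 A ∈ A ∩ T1 := by rw [this]; exact Finset.mem_singleton_self _
    exact ⟨(Finset.mem_inter.1 hmem).2, (Finset.mem_inter.1 hmem).1⟩
  have hx2T : ∀ A ∈ F3, x2 A ∈ T2 ∧ x2 A ∈ A := by
    intro A hA
    have := hA2 A hA
    have hmem : x2 A ∈ A ∩ T2 := by rw [this]; exact Finset.mem_singleton_self _
    exact ⟨(Finset.mem_inter.1 hmem).2, (Finset.mem_inter.1 hmem).1⟩
  have hx3T : ∀ A ∈ F3, x3 A ∈ T3 ∧ x3 A ∈ A := by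
    intro A hA
    have := hA3 A hA
    have hmem : x3 A ∈ A ∩ T3 := by rw [this]; exact Finset.mem_singleton_self _
    exact ⟨(Finset.mem_inter.1 hmem).2, (Finset.mem_inter.1 hmem).1⟩
  have hAT : ∀ A ∈ F3, A ∩ T = {x1 A} ∪ {x2 A} ∪ {x3 A} := by
    intro A hA
    rw [hT, Finset.inter_union_distrib_left, Finset.inter_union_distrib_left,
      hA1 A hA, hA2 A hA, hA3 A hA]
  -- labelling functions
  have hcT1 : Fintype.card {x // x ∈ T1} = Fintype.card (ZMod l) := by
    simp [Fintype.card_coe, hT1, ZMod.card]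
  have hcT2 : Fintype.card {x // x ∈ T2} = Fintype.card (ZMod l) := by
    simp [Fintype.card_coe, hT2, ZMod.card]
  have hcT3 : Fintype.card {x // x ∈ T3} = Fintype.card (ZMod l) := by
    simp [Fintype.card_coe, hT3, ZMod.card]
  set e1 : {x // x ∈ T1} ≃ ZMod l := Fintype.equivOfCardEq hcT1 with he1
  set e2 : {x // x ∈ T2} ≃ ZMod l := Fintype.equivOfCardEq hcT2 with he2
  set e3 : {x // x ∈ T3} ≃ ZMod l := Fintype.equivOfCardEq hcT3 with he3
  set v1 : Fin m → ZMod l := fun x => if h : x ∈ T1 then e1 ⟨x, h⟩ else 0 with hv1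
  set v2 : Fin m → ZMod l := fun x => if h : x ∈ T2 then e2 ⟨x, h⟩ else 0 with hv2
  set v3 : Fin m → ZMod l := fun x => if h : x ∈ T3 then e3 ⟨x, h⟩ else 0 with hv3
  have hv1inj : ∀ x ∈ T1, ∀ y ∈ T1, v1 x = v1 y → x = y := by
    intro x hx y hy hxy
    rw [hv1] at hxy
    simp only [dif_pos hx, dif_pos hy] at hxy
    exact congrArg Subtype.val (e1.injective hxy)
  have hv2inj : ∀ x ∈ T2, ∀ y ∈ T2, v2 x = v2 y → x = y := by
    intro x hx y hy hxy
    rw [hv2] at hxy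
    simp only [dif_pos hx, dif_pos hy] at hxy
    exact congrArg Subtype.val (e2.injective hxy)
  have hv3inj : ∀ x ∈ T3, ∀ y ∈ T3, v3 x = v3 y → x = y := by
    intro x hx y hy hxy
    rw [hv3] at hxy
    simp only [dif_pos hx, dif_pos hy] at hxy
    exact congrArg Subtype.val (e3.injective hxy)
  -- the class map
  set cls : Finset (Fin m) → ZMod l × ZMod l := fun A =>
    (v2 (x2 A) - v1 (x1 A), v3 (x3 A) - v1 (x1 A)) with hcls
  have hcount : F3.card = ∑ uv ∈ (Finset.univ : Finset (ZMod l × ZMod l)),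
      (F3.filter (fun A => cls A = uv)).card :=
    Finset.card_eq_sum_card_fiberwise (fun x _ => Finset.mem_univ _)
  -- the ground set for the tails
  set X : Finset (Fin m) := Finset.univ \ T with hX
  have hXcard : X.card = m - 3 * l := by
    rw [hX, Finset.card_sdiff_of_subset (Finset.subset_univ T), hTcard, Finset.card_univ,
      Fintype.card_fin]
  -- per fiber bound
  have hfiber : ∀ uv : ZMod l × ZMod l,
      (F3.filter (fun A => cls A = uv)).card ≤ Nat.choose (m - 3 * l) (k - 3) := by
    intro uv
    set G := F3.filter (fun A => cls A = uv) with hG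
    have hGsub : G ⊆ F3 := Finset.filter_subset _ _
    set 𝒜 : ZMod l → Finset (Finset (Fin m)) := fun w =>
      (G.filter (fun A => v1 (x1 A) = w)).image (fun A => A \ T) with h𝒜
    -- G splits into fibers of w
    have hGcount : G.card = ∑ w : ZMod l, (G.filter (fun A => v1 (x1 A) = w)).card :=
      Finset.card_eq_sum_card_fiberwise (fun x _ => Finset.mem_univ _)
    -- reconstruction
    have hrecon : ∀ A ∈ G, ∀ B ∈ G, v1 (x1 A) = v1 (x1 B) → A \ T = B \ T → A = B := by
      intro A hA B hB hw hAB
      rw [hG, Finset.mem_filter] at hA hB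
      obtain ⟨hAF3, hclsA⟩ := hA
      obtain ⟨hBF3, hclsB⟩ := hB
      have h1 : x1 A = x1 B :=
        hv1inj _ (hx1T A hAF3).1 _ (hx1T B hBF3).1 hw
      have hcls2 : v2 (x2 A) = v2 (x2 B) := by
        have ha := congrArg Prod.fst hclsA
        have hb := congrArg Prod.fst hclsB
        simp only [hcls] at ha hb
        have : v2 (x2 A) - v1 (x1 A) = v2 (x2 B) - v1 (x1 B) := by rw [ha, hb]
        rw [hw] at this
        exact sub_left_injective this
      have hcls3 : v3 (x3 A) = v3 (x3 B) := by
        have ha := congrArg Prod.snd hclsA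
        have hb := congrArg Prod.snd hclsB
        simp only [hcls] at ha hb
        have : v3 (x3 A) - v1 (x1 A) = v3 (x3 B) - v1 (x1 B) := by rw [ha, hb]
        rw [hw] at this
        exact sub_left_injective this
      have h2 : x2 A = x2 B :=
        hv2inj _ (hx2T A hAF3).1 _ (hx2T B hBF3).1 hcls2
      have h3 : x3 A = x3 B :=
        hv3inj _ (hx3T A hAF3).1 _ (hx3T B hBF3).1 hcls3
      have hAeq : A = (A \ T) ∪ (A ∩ T) := (Finset.sdiff_union_inter A T).symm
      have hBeq : B = (B \ T) ∪ (B ∩ T) := (Finset.sdiff_union_inter B T).symm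
      rw [hAeq, hBeq, hAB, hAT A hAF3, hAT B hBF3, h1, h2, h3]
    have hinj : ∀ w : ZMod l,
        (G.filter (fun A => v1 (x1 A) = w)).card = (𝒜 w).card := by
      intro w
      rw [h𝒜]
      refine (Finset.card_image_of_injOn ?_).symm
      intro A hA B hB hAB
      simp only [Finset.mem_coe, Finset.mem_filter] at hA hB
      exact hrecon A hA.1 B hB.1 (hA.2.trans hB.2.symm) hAB
    -- apply hilton
    have hcardZ : Fintype.card (ZMod l) = l := ZMod.card l
    have hl4 : 4 ≤ Fintype.card (ZMod l) := by rw [hcardZ]; exact hl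
    have hlk : l * (k - 3) + 3 * l = l * k := by
      obtain ⟨d, rfl⟩ : ∃ d, k = d + 3 := ⟨k - 3, by omega⟩
      simp only [Nat.add_sub_cancel]
      ring
    have hmul : l * k = k * l := Nat.mul_comm l k
    have hnn : Fintype.card (ZMod l) * (k - 3) ≤ X.card := by
      rw [hcardZ, hXcard]
      omega
    have hsub : ∀ w, ∀ S ∈ 𝒜 w, S ⊆ X := by
      intro w S hS
      rw [h𝒜] at hS
      obtain ⟨A, _, rfl⟩ := Finset.mem_image.1 hS
      rw [hX]
      exact Finset.sdiff_subset_sdiff (Finset.subset_univ A) le_rfl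
    have hcardtail : ∀ w, ∀ S ∈ 𝒜 w, S.card = k - 3 := by
      intro w S hS
      rw [h𝒜] at hS
      obtain ⟨A, hA, rfl⟩ := Finset.mem_image.1 hS
      have hAF3 : A ∈ F3 := hGsub (Finset.mem_filter.1 hA).1
      have hAF : A ∈ F := (Finset.mem_filter.1 hAF3).1
      have hAcard : A.card = k := huniform A hAF
      have hAint : (A ∩ T).card = 3 := (Finset.mem_filter.1 hAF3).2
      have : A \ T = A \ (A ∩ T) := by
        ext y; simp only [Finset.mem_sdiff, Finset.mem_inter]; tauto
      rw [this, Finset.card_sdiff_of_subset Finset.inter_subset_left, hAcard, hAint]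
    have hcross : ∀ w w', w ≠ w' → ∀ S ∈ 𝒜 w, ∀ S' ∈ 𝒜 w', (S ∩ S').Nonempty := by
      intro w w' hww' S hS S' hS'
      rw [h𝒜] at hS hS'
      obtain ⟨A, hA, rfl⟩ := Finset.mem_image.1 hS
      obtain ⟨B, hB, rfl⟩ := Finset.mem_image.1 hS'
      have hAfil := Finset.mem_filter.1 hA
      have hBfil := Finset.mem_filter.1 hB
      have hAF3 : A ∈ F3 := hGsub hAfil.1
      have hBF3 : B ∈ F3 := hGsub hBfil.1
      have hAF : A ∈ F := (Finset.mem_filter.1 hAF3).1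
      have hBF : B ∈ F := (Finset.mem_filter.1 hBF3).1
      have hwA : v1 (x1 A) = w := hAfil.2
      have hwB : v1 (x1 B) = w' := hBfil.2
      have hclsA : cls A = uv := (Finset.mem_filter.1 hAfil.1).2
      have hclsB : cls B = uv := (Finset.mem_filter.1 hBfil.1).2
      have hv2A : v2 (x2 A) = uv.1 + w := by
        have := congrArg Prod.fst hclsA
        simp only [hcls] at this
        rw [← this, ← hwA]; ring
      have hv2B : v2 (x2 B) = uv.1 + w' := by
        have := congrArg Prod.fst hclsB
        simp only [hcls] at this
        rw [← this, ← hwB]; ring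
      have hv3A : v3 (x3 A) = uv.2 + w := by
        have := congrArg Prod.snd hclsA
        simp only [hcls] at this
        rw [← this, ← hwA]; ring
      have hv3B : v3 (x3 B) = uv.2 + w' := by
        have := congrArg Prod.snd hclsB
        simp only [hcls] at this
        rw [← this, ← hwB]; ring
      obtain ⟨y, hy⟩ := hintersecting A hAF B hBF
      rw [Finset.mem_inter] at hy
      have hyT : y ∉ T := by
        intro hyT
        have hyA : y ∈ A ∩ T := Finset.mem_inter.2 ⟨hy.1, hyT⟩
        have hyB : y ∈ B ∩ T := Finset.mem_inter.2 ⟨hy.2, hyT⟩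
        rw [hAT A hAF3] at hyA
        rw [hAT B hBF3] at hyB
        simp only [Finset.mem_union, Finset.mem_singleton] at hyA hyB
        rcases hyA with (h | h) | h <;> rcases hyB with (h' | h') | h'
        · exact hww' (by rw [← hwA, ← hwB, show x1 A = x1 B by rw [← h]; exact h'])
        · exact Finset.disjoint_left.1 h12
            (show y ∈ T1 by rw [h]; exact (hx1T A hAF3).1)
            (show y ∈ T2 by rw [h']; exact (hx2T B hBF3).1)
        · exact Finset.disjoint_left.1 h13
            (show y ∈ T1 by rw [h]; exact (hx1T A hAF3).1)
            (show y ∈ T3 by rw [h']; exact (hx3T B hBF3).1)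
        · exact Finset.disjoint_left.1 h12
            (show y ∈ T1 by rw [h']; exact (hx1T B hBF3).1)
            (show y ∈ T2 by rw [h]; exact (hx2T A hAF3).1)
        · exact hww' (add_left_cancel
            (by rw [← hv2A, ← hv2B, show x2 A = x2 B by rw [← h]; exact h'] :
              uv.1 + w = uv.1 + w'))
        · exact Finset.disjoint_left.1 h23
            (show y ∈ T2 by rw [h]; exact (hx2T A hAF3).1)
            (show y ∈ T3 by rw [h']; exact (hx3T B hBF3).1)
        · exact Finset.disjoint_left.1 h13
            (show y ∈ T1 by rw [h']; exact (hx1T B hBF3).1)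
            (show y ∈ T3 by rw [h]; exact (hx3T A hAF3).1)
        · exact Finset.disjoint_left.1 h23
            (show y ∈ T2 by rw [h']; exact (hx2T B hBF3).1)
            (show y ∈ T3 by rw [h]; exact (hx3T A hAF3).1)
        · exact hww' (add_left_cancel
            (by rw [← hv3A, ← hv3B, show x3 A = x3 B by rw [← h]; exact h'] :
              uv.2 + w = uv.2 + w'))
      refine ⟨y, Finset.mem_inter.2 ⟨Finset.mem_sdiff.2 ⟨hy.1, hyT⟩,
        Finset.mem_sdiff.2 ⟨hy.2, hyT⟩⟩⟩
    have hHil := hilton X (k - 3) hl4 hnn 𝒜 hsub hcardtail hcross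
    rw [hXcard] at hHil
    calc G.card = ∑ w : ZMod l, (G.filter (fun A => v1 (x1 A) = w)).card := hGcount
    _ = ∑ w : ZMod l, (𝒜 w).card := Finset.sum_congr rfl fun w _ => hinj w
    _ ≤ Nat.choose (m - 3 * l) (k - 3) := hHil
  -- summing up
  rw [hcount]
  calc ∑ uv ∈ (Finset.univ : Finset (ZMod l × ZMod l)),
      (F3.filter (fun A => cls A = uv)).card
      ≤ ∑ _uv ∈ (Finset.univ : Finset (ZMod l × ZMod l)),
        Nat.choose (m - 3 * l) (k - 3) :=
      Finset.sum_le_sum fun uv _ => hfiber uv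
  _ = l ^ 2 * Nat.choose (m - 3 * l) (k - 3) := by
      rw [Finset.sum_const, smul_eq_mul, Finset.card_univ, Fintype.card_prod, ZMod.card]
      ring
end

section
/- Let k ≥ 4 and n ≥ 4k², and let F be a maximal non-trivial intersecting family of k-element subsets of [n] with δ(F) > C(n−2, k−2) − C(n−k−2, k−2). Then the kernel of F contains at most one 2-element set, i.e., |K₂| ≤ 1. -/
open Finset

lemma pow_aux (s t : ℕ) : ∀ d, 2*d*s ≤ t → t*(t+s)^d ≤ t^(d+1) + 2*d*s*t^d := by
  intro d
  induction d with
  | zero => simp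
  | succ d ih =>
    intro h
    have hd : 2*d*s ≤ t := le_trans (by nlinarith) h
    have h1 := ih hd
    have h2 : t*(t+s)^(d+1) = (t*(t+s)^d)*(t+s) := by ring
    have h3 : (t*(t+s)^d)*(t+s) ≤ (t^(d+1) + 2*d*s*t^d)*(t+s) :=
      Nat.mul_le_mul_right _ h1
    have h4 : (t^(d+1) + 2*d*s*t^d)*(t+s) ≤ t^(d+2) + 2*(d+1)*s*t^(d+1) := by
      have key : 2*d*s*s*t^d ≤ s*(t*t^d) := by
        calc 2*d*s*s*t^d ≤ t*s*t^d := by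
              have := Nat.mul_le_mul_right (s*t^d) hd
              nlinarith
          _ = s*(t*t^d) := by ring
      have e1 : t^(d+1) = t*t^d := by rw [pow_succ]; ring
      have e2 : t^(d+2) = t*(t*t^d) := by rw [pow_succ, pow_succ]; ring
      rw [e1, e2]
      nlinarith [key]
    calc t*(t+s)^(d+1) = (t*(t+s)^d)*(t+s) := h2
      _ ≤ (t^(d+1) + 2*d*s*t^d)*(t+s) := h3
      _ ≤ t^(d+2) + 2*(d+1)*s*t^(d+1) := h4
      _ = t^(d+1+1) + 2*(d+1)*s*t^(d+1) := by ring

lemma pow_two_mul (s t d : ℕ) (h : 2*d*s ≤ t) : (t+s)^d ≤ 2*t^d := by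
  rcases Nat.eq_zero_or_pos t with ht | ht
  · subst ht
    rcases Nat.eq_zero_or_pos d with hd | hd
    · subst hd; simp
    · have hs : s = 0 := by nlinarith
      subst hs
      obtain ⟨e, rfl⟩ : ∃ e, d = e+1 := ⟨d-1, by omega⟩
      simp
  · have h1 := pow_aux s t d h
    have h2 : t*(t+s)^d ≤ t*(2*t^d) := by
      calc t*(t+s)^d ≤ t^(d+1) + 2*d*s*t^d := h1
        _ ≤ t^(d+1) + t*t^d := by
            have := Nat.mul_le_mul_right (t^d) h
            omega
        _ = t*(2*t^d) := by ring
    exact Nat.le_of_mul_le_mul_left h2 ht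

lemma choose_desc_identity (r : ℕ) : ∀ d m, (m.choose r) * ((m-r).descFactorial d) = (m.descFactorial d) * ((m-d).choose r) := by
  intro d
  induction d with
  | zero => simp
  | succ d ih =>
    intro m
    rw [Nat.descFactorial_succ, Nat.descFactorial_succ]
    have step : (m-d).choose r * (m-d-r) = (m-d) * ((m-d-1).choose r) := by
      rcases Nat.eq_zero_or_pos (m-d) with h0 | h0
      · rw [h0]; simp
      · obtain ⟨a, ha⟩ : ∃ a, m - d = a + 1 := ⟨m-d-1, by omega⟩
        rw [ha, show a+1-1 = a from rfl]
        have hc := Nat.choose_mul_succ_eq a r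
        rw [← hc]
        exact Nat.mul_comm _ _
    have hsub : m - r - d = m - d - r := by omega
    calc m.choose r * ((m-r-d) * (m-r).descFactorial d)
        = (m.choose r * (m-r).descFactorial d) * (m-r-d) := by ring
      _ = (m.descFactorial d * (m-d).choose r) * (m-r-d) := by rw [ih]
      _ = m.descFactorial d * ((m-d).choose r * (m-d-r)) := by rw [hsub]; ring
      _ = m.descFactorial d * ((m-d) * ((m-d-1).choose r)) := by rw [step]
      _ = (m-d) * m.descFactorial d * ((m-(d+1)).choose r) := by
          rw [show m-(d+1) = m-d-1 by omega]; ring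

lemma choose_ratio (m r d : ℕ) (h1 : r + d ≤ m) (h2 : 2*d*(r+d-1) ≤ m - (r+d-1)) :
    m.choose r ≤ 2 * ((m-d).choose r) := by
  set s := r + d - 1 with hs
  set t := m - s with hts
  have hdm : d ≤ m - r := by omega
  have hpos : 0 < (m-r).descFactorial d := by
    rcases Nat.eq_zero_or_pos ((m-r).descFactorial d) with h | h
    · exfalso; rw [Nat.descFactorial_eq_zero_iff_lt] at h; omega
    · exact h
  have key : m.choose r * ((m-r).descFactorial d) ≤ 2 * ((m-d).choose r) * ((m-r).descFactorial d) := by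
    rw [choose_desc_identity]
    have hb1 : m.descFactorial d ≤ m ^ d := Nat.descFactorial_le_pow m d
    have hb2 : t ^ d ≤ (m-r).descFactorial d := by
      have := Nat.pow_sub_le_descFactorial (m-r) d
      have : (m - r + 1 - d) ^ d ≤ (m-r).descFactorial d := this
      have he : t ≤ m - r + 1 - d := by omega
      exact le_trans (Nat.pow_le_pow_left he d) this
    have hm : m = t + s := by omega
    have hp : m ^ d ≤ 2 * t ^ d := by rw [hm]; exact pow_two_mul s t d h2
    calc m.descFactorial d * ((m-d).choose r)
        ≤ m ^ d * ((m-d).choose r) := Nat.mul_le_mul_right _ hb1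
      _ ≤ 2 * t ^ d * ((m-d).choose r) := Nat.mul_le_mul_right _ hp
      _ ≤ 2 * ((m-r).descFactorial d) * ((m-d).choose r) := by
          have := Nat.mul_le_mul_right ((m-d).choose r) (Nat.mul_le_mul_left 2 hb2)
          exact this
      _ = 2 * ((m-d).choose r) * ((m-r).descFactorial d) := by ring
  exact Nat.le_of_mul_le_mul_right key hpos

lemma choose_mul_le (m r c : ℕ) (h : c*(r+1) ≤ m - r) : c * m.choose r ≤ m.choose (r+1) := by
  have key := Nat.choose_succ_right_eq m r
  have h1 : c * m.choose r * (r+1) ≤ m.choose (r+1) * (r+1) := by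
    rw [key]
    calc c * m.choose r * (r+1) = m.choose r * (c*(r+1)) := by ring
      _ ≤ m.choose r * (m - r) := Nat.mul_le_mul_left _ h
  exact Nat.le_of_mul_le_mul_right h1 (by omega)

lemma pas' (a b a' b' : ℕ) (ha : a' = a+1) (hb : b' = b+1) :
    a'.choose b' = a.choose b + a.choose b' := by
  subst ha; subst hb; exact Nat.choose_succ_succ a b

lemma choose_up' (a r a' : ℕ) (ha : a' = a + 1)
    (h : a'*(r+1) ≤ (a-r)*(a+1-r)) (hr : r ≤ a) : a'.choose r ≤ a.choose (r+1) := by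
  subst ha
  have h1 := Nat.choose_mul_succ_eq a r
  have h2 := Nat.choose_succ_right_eq a r
  have hpos : 0 < (a+1-r)*(r+1) := Nat.mul_pos (by omega) (by omega)
  have key : (a+1).choose r * ((a+1-r)*(r+1)) ≤ a.choose (r+1) * ((a+1-r)*(r+1)) := by
    calc (a+1).choose r * ((a+1-r)*(r+1)) = ((a+1).choose r * (a+1-r))*(r+1) := by ring
      _ = (a.choose r * (a+1))*(r+1) := by rw [← h1]
      _ = a.choose r * ((a+1)*(r+1)) := by ring
      _ ≤ a.choose r * ((a-r)*(a+1-r)) := Nat.mul_le_mul_left _ h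
      _ = (a.choose r * (a-r))*(a+1-r) := by ring
      _ = (a.choose (r+1) * (r+1))*(a+1-r) := by rw [h2]
      _ = a.choose (r+1) * ((a+1-r)*(r+1)) := by ring
  exact Nat.le_of_mul_le_mul_right key hpos

lemma ineqA' (q r : ℕ) (hq : 2*(r+3)*(2*r+3) + r + 3 ≤ q) :
    (q+r+4).choose (r+1) + 2*((q+r+3).choose (r+1)) + (q+1).choose (r+2)
      ≤ (q+r+5).choose (r+2) := by
  have hr : r + 3 ≤ q := by nlinarith
  have e5 := pas' (q+r+4) (r+1) (q+r+5) (r+2) (by omega) (by omega)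
  have e4 := pas' (q+r+3) (r+1) (q+r+4) (r+2) (by omega) (by omega)
  have e3 := pas' (q+r+2) (r+1) (q+r+3) (r+2) (by omega) (by omega)
  have e2 := pas' (q+r+1) (r+1) (q+r+2) (r+2) (by omega) (by omega)
  have p3 := pas' (q+r+2) r (q+r+3) (r+1) (by omega) (by omega)
  have m1 : (q+1).choose (r+2) ≤ (q+r+1).choose (r+2) := Nat.choose_le_choose _ (by omega)
  have m2 : (q+r+2).choose r ≤ (q+r+1).choose (r+1) := by
    apply choose_up' (q+r+1) r (q+r+2) (by omega) ?_ (by omega)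
    rw [show q+r+1-r = q+1 by omega, show q+r+1+1-r = q+2 by omega]
    nlinarith [Nat.mul_le_mul_left r hr, Nat.mul_le_mul_left q hr]
  omega

lemma ineqB1' (q r : ℕ) :
    (q+r+4).choose (r+1) + (q+r+3).choose (r+1) + (q+r+3).choose (r+2)
      ≤ (q+r+5).choose (r+2) := by
  have e5 := pas' (q+r+4) (r+1) (q+r+5) (r+2) (by omega) (by omega)
  have e4 := pas' (q+r+3) (r+1) (q+r+4) (r+2) (by omega) (by omega)
  omega

lemma ineqB2' (q r : ℕ) (hq : 2*(r+3)*(2*r+3) + r + 3 ≤ q) :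
    (q+r+4).choose (r+1) + 2*((q+r+3).choose (r+1)) + (q+r+3).choose (r+2) + q.choose (r+2)
      ≤ (q+r+5).choose (r+2) + (q+1).choose (r+2) + q.choose (r+1) := by
  have hr : r + 3 ≤ q := by nlinarith
  have e5 := pas' (q+r+4) (r+1) (q+r+5) (r+2) (by omega) (by omega)
  have e4 := pas' (q+r+3) (r+1) (q+r+4) (r+2) (by omega) (by omega)
  have pQ := pas' q (r+1) (q+1) (r+2) (by omega) (by omega)
  have h2 : 2*(r+3)*((r+1)+(r+3)-1) ≤ (q+r+3) - ((r+1)+(r+3)-1) := by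
    rw [show (r+1)+(r+3)-1 = 2*r+3 by omega]
    generalize hM : 2*(r+3)*(2*r+3) = M at hq ⊢
    omega
  have hrat := choose_ratio (q+r+3) (r+1) (r+3) (by omega) h2
  rw [show q+r+3-(r+3) = q by omega] at hrat
  omega

open Finset

lemma cnt_card {n : ℕ} (k : ℕ) (R W : Finset (Fin n)) (hdisj : Disjoint R W) (hRk : R.card ≤ k) :
    ((Finset.univ.powersetCard k).filter (fun A => R ⊆ A ∧ Disjoint A W)).card
      = (n - (R.card + W.card)).choose (k - R.card) := by
  have hcard : (Finset.univ \ (R ∪ W)).card = n - (R.card + W.card) := by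
    rw [Finset.card_sdiff_of_subset (Finset.subset_univ _), Finset.card_univ, Fintype.card_fin,
      Finset.card_union_of_disjoint hdisj]
  rw [← hcard, ← Finset.card_powersetCard]
  apply Finset.card_bij' (fun A _ => A \ R) (fun B _ => B ∪ R)
  · intro A hA
    rw [Finset.mem_filter, Finset.mem_powersetCard_univ] at hA
    obtain ⟨hAk, hRA, hAW⟩ := hA
    rw [Finset.mem_powersetCard]
    constructor
    · intro x hx
      rw [Finset.mem_sdiff] at hx
      rw [Finset.mem_sdiff]
      refine ⟨Finset.mem_univ x, ?_⟩
      rw [Finset.mem_union]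
      push_neg
      exact ⟨hx.2, fun hw => (Finset.disjoint_left.mp hAW) hx.1 hw⟩
    · rw [Finset.card_sdiff_of_subset hRA, hAk]
  · intro B hB
    rw [Finset.mem_powersetCard] at hB
    obtain ⟨hBsub, hBcard⟩ := hB
    have hBR : Disjoint B R := by
      rw [Finset.disjoint_left]
      intro x hx hxR
      have := hBsub hx
      rw [Finset.mem_sdiff, Finset.mem_union] at this
      exact this.2 (Or.inl hxR)
    have hBW : Disjoint B W := by
      rw [Finset.disjoint_left]
      intro x hx hxW
      have := hBsub hx
      rw [Finset.mem_sdiff, Finset.mem_union] at this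
      exact this.2 (Or.inr hxW)
    rw [Finset.mem_filter, Finset.mem_powersetCard_univ]
    refine ⟨?_, Finset.subset_union_right, Finset.disjoint_union_left.mpr ⟨hBW, hdisj⟩⟩
    rw [Finset.card_union_of_disjoint hBR, hBcard]
    omega
  · intro A hA
    rw [Finset.mem_filter, Finset.mem_powersetCard_univ] at hA
    exact Finset.sdiff_union_of_subset hA.2.1
  · intro B hB
    rw [Finset.mem_powersetCard] at hB
    apply Finset.union_sdiff_cancel_right
    rw [Finset.disjoint_left]
    intro x hx hxR
    have := hB.1 hx
    rw [Finset.mem_sdiff, Finset.mem_union] at this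
    exact this.2 (Or.inl hxR)

open Finset

section
variable {n k : ℕ} (F : Finset (Finset (Fin n)))

lemma sub_cnt (huniform : ∀ A ∈ F, A.card = k)
    (p : Finset (Fin n) → Prop) [DecidablePred p] (R W : Finset (Fin n))
    (h : ∀ A ∈ F, p A → R ⊆ A ∧ Disjoint A W) :
    F.filter p ⊆ (Finset.univ.powersetCard k).filter (fun A => R ⊆ A ∧ Disjoint A W) := by
  intro A hA
  rw [Finset.mem_filter] at hA ⊢
  exact ⟨Finset.mem_powersetCard_univ.mpr (huniform A hA.1), h A hA.1 hA.2⟩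

lemma bound_cnt (huniform : ∀ A ∈ F, A.card = k)
    (p : Finset (Fin n) → Prop) [DecidablePred p] (R W : Finset (Fin n))
    (h : ∀ A ∈ F, p A → R ⊆ A ∧ Disjoint A W)
    (hd : Disjoint R W) (hRk : R.card ≤ k) :
    (F.filter p).card ≤ (n - (R.card + W.card)).choose (k - R.card) := by
  calc (F.filter p).card
      ≤ ((Finset.univ.powersetCard k).filter (fun A => R ⊆ A ∧ Disjoint A W)).card :=
        Finset.card_le_card (sub_cnt F huniform p R W h)
    _ = (n - (R.card + W.card)).choose (k - R.card) := cnt_card k R W hd hRk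

lemma bound_sub (huniform : ∀ A ∈ F, A.card = k)
    (hintersecting : ∀ A ∈ F, ∀ B ∈ F, (A ∩ B).Nonempty)
    (p : Finset (Fin n) → Prop) [DecidablePred p] (R W W' : Finset (Fin n))
    (B : Finset (Fin n)) (hBF : B ∈ F) (hBW' : B ⊆ W') (hWW' : W ⊆ W')
    (h : ∀ A ∈ F, p A → R ⊆ A ∧ Disjoint A W)
    (hdR : Disjoint R W') (hRk : R.card ≤ k) :
    (F.filter p).card + (n - (R.card + W'.card)).choose (k - R.card)
      ≤ (n - (R.card + W.card)).choose (k - R.card) := by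
  set X := (Finset.univ.powersetCard k).filter (fun A => R ⊆ A ∧ Disjoint A W) with hX
  set Y := (Finset.univ.powersetCard k).filter (fun A => R ⊆ A ∧ Disjoint A W') with hY
  have hYX : Y ⊆ X := by
    intro A hA
    rw [hX, hY, Finset.mem_filter] at *
    exact ⟨hA.1, hA.2.1, Finset.disjoint_of_subset_right hWW' hA.2.2⟩
  have hPXY : F.filter p ⊆ X \ Y := by
    intro A hA
    rw [Finset.mem_sdiff]
    refine ⟨sub_cnt F huniform p R W h hA, ?_⟩
    rw [Finset.mem_filter] at hA
    intro hAY
    rw [hY, Finset.mem_filter] at hAY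
    obtain ⟨y, hy⟩ := hintersecting A hA.1 B hBF
    rw [Finset.mem_inter] at hy
    exact Finset.disjoint_left.mp hAY.2.2 hy.1 (hBW' hy.2)
  have h1 : (F.filter p).card ≤ X.card - Y.card := by
    calc (F.filter p).card ≤ (X \ Y).card := Finset.card_le_card hPXY
      _ = X.card - Y.card := Finset.card_sdiff_of_subset hYX
  have h2 : Y.card ≤ X.card := Finset.card_le_card hYX
  have hXc : X.card = (n - (R.card + W.card)).choose (k - R.card) :=
    cnt_card k R W (Finset.disjoint_of_subset_right hWW' hdR) hRk
  have hYc : Y.card = (n - (R.card + W'.card)).choose (k - R.card) :=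
    cnt_card k R W' hdR hRk
  omega

lemma bound_sub2 (huniform : ∀ A ∈ F, A.card = k)
    (hintersecting : ∀ A ∈ F, ∀ B ∈ F, (A ∩ B).Nonempty)
    (p : Finset (Fin n) → Prop) [DecidablePred p] (R W : Finset (Fin n))
    (B B' E : Finset (Fin n)) (hBF : B ∈ F) (hB'F : B' ∈ F)
    (hWB : W ⊆ B) (hWB' : W ⊆ B') (hE : E ⊆ B ∪ B')
    (h : ∀ A ∈ F, p A → R ⊆ A ∧ Disjoint A W)
    (hdB : Disjoint R B) (hdB' : Disjoint R B') (hRk : R.card ≤ k) :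
    (F.filter p).card + (n - (R.card + B.card)).choose (k - R.card)
        + (n - (R.card + B'.card)).choose (k - R.card)
      ≤ (n - (R.card + W.card)).choose (k - R.card)
        + (n - (R.card + E.card)).choose (k - R.card) := by
  set X := (Finset.univ.powersetCard k).filter (fun A => R ⊆ A ∧ Disjoint A W) with hX
  set Y := (Finset.univ.powersetCard k).filter (fun A => R ⊆ A ∧ Disjoint A B) with hY
  set Z := (Finset.univ.powersetCard k).filter (fun A => R ⊆ A ∧ Disjoint A B') with hZ
  set YE := (Finset.univ.powersetCard k).filter (fun A => R ⊆ A ∧ Disjoint A E) with hYE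
  have hYX : Y ⊆ X := fun A hA => by
    rw [hY, Finset.mem_filter] at hA
    rw [hX, Finset.mem_filter]
    exact ⟨hA.1, hA.2.1, Finset.disjoint_of_subset_right hWB hA.2.2⟩
  have hZX : Z ⊆ X := fun A hA => by
    rw [hZ, Finset.mem_filter] at hA
    rw [hX, Finset.mem_filter]
    exact ⟨hA.1, hA.2.1, Finset.disjoint_of_subset_right hWB' hA.2.2⟩
  have hYZX : Y ∪ Z ⊆ X := Finset.union_subset hYX hZX
  have hPX : F.filter p ⊆ X \ (Y ∪ Z) := by
    intro A hA
    rw [Finset.mem_sdiff]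
    refine ⟨sub_cnt F huniform p R W h hA, ?_⟩
    rw [Finset.mem_filter] at hA
    intro hAYZ
    rw [Finset.mem_union] at hAYZ
    rcases hAYZ with hAY | hAZ
    · rw [hY, Finset.mem_filter] at hAY
      obtain ⟨y, hy⟩ := hintersecting A hA.1 B hBF
      rw [Finset.mem_inter] at hy
      exact Finset.disjoint_left.mp hAY.2.2 hy.1 hy.2
    · rw [hZ, Finset.mem_filter] at hAZ
      obtain ⟨y, hy⟩ := hintersecting A hA.1 B' hB'F
      rw [Finset.mem_inter] at hy
      exact Finset.disjoint_left.mp hAZ.2.2 hy.1 hy.2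
  have hYZE : Y ∩ Z ⊆ YE := by
    intro A hA
    rw [Finset.mem_inter] at hA
    obtain ⟨hAY, hAZ⟩ := hA
    rw [hY, Finset.mem_filter] at hAY
    rw [hZ, Finset.mem_filter] at hAZ
    rw [hYE, Finset.mem_filter]
    refine ⟨hAY.1, hAY.2.1, ?_⟩
    exact Finset.disjoint_of_subset_right hE
      (Finset.disjoint_union_right.mpr ⟨hAY.2.2, hAZ.2.2⟩)
  have h1 : (F.filter p).card ≤ X.card - (Y ∪ Z).card := by
    calc (F.filter p).card ≤ (X \ (Y ∪ Z)).card := Finset.card_le_card hPX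
      _ = X.card - (Y ∪ Z).card := Finset.card_sdiff_of_subset hYZX
  have h2 : (Y ∪ Z).card ≤ X.card := Finset.card_le_card hYZX
  have h3 := Finset.card_union_add_card_inter Y Z
  have h4 : (Y ∩ Z).card ≤ YE.card := Finset.card_le_card hYZE
  have hdW : Disjoint R W := Finset.disjoint_of_subset_right hWB hdB
  have hdE : Disjoint R E :=
    Finset.disjoint_of_subset_right hE (Finset.disjoint_union_right.mpr ⟨hdB, hdB'⟩)
  have hXc : X.card = (n - (R.card + W.card)).choose (k - R.card) := cnt_card k R W hdW hRk
  have hYc : Y.card = (n - (R.card + B.card)).choose (k - R.card) := cnt_card k R B hdB hRk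
  have hZc : Z.card = (n - (R.card + B'.card)).choose (k - R.card) := cnt_card k R B' hdB' hRk
  have hEc : YE.card = (n - (R.card + E.card)).choose (k - R.card) := cnt_card k R E hdE hRk
  omega

end

open Finset

lemma exists_not_mem_fin {n : ℕ} (U : Finset (Fin n)) (h : U.card < n) : ∃ x, x ∉ U := by
  by_contra hc
  push_neg at hc
  have : U = Finset.univ := Finset.eq_univ_iff_forall.mpr hc
  rw [this, Finset.card_univ, Fintype.card_fin] at h
  omega

lemma cover_unique (n u : ℕ) (hn : 4 * (u+4) ^ 2 ≤ n)
    (F : Finset (Finset (Fin n)))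
    (huniform : ∀ A ∈ F, A.card = u+4)
    (hintersecting : ∀ A ∈ F, ∀ B ∈ F, (A ∩ B).Nonempty)
    (hmaximal : ∀ G : Finset (Fin n), G.card = u+4 → G ∉ F →
      ¬ (∀ A ∈ insert G F, ∀ B ∈ insert G F, (A ∩ B).Nonempty))
    (hdelta : ∀ x : Fin n,
      Nat.choose (n - 2) (u+2) - Nat.choose (n - (u+4) - 2) (u+2) <
        (F.filter (fun A => x ∈ A)).card)
    (S T : Finset (Fin n))
    (hScard : S.card = 2) (hScov : ∀ A ∈ F, (S ∩ A).Nonempty)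
    (hSmin : ∀ S' ⊂ S, ¬ (∀ A ∈ F, (S' ∩ A).Nonempty))
    (hTcard : T.card = 2) (hTcov : ∀ A ∈ F, (T ∩ A).Nonempty) :
    S = T := by
  by_contra hST
  have hn8 : 3*(u+4)+4 ≤ n := by nlinarith
  -- maximality: any (u+4)-set containing a cover is in F
  have hsup : ∀ S' : Finset (Fin n), (∀ A ∈ F, (S' ∩ A).Nonempty) →
      ∀ G : Finset (Fin n), S' ⊆ G → G.card = u+4 → G ∈ F := by
    intro S' hS' G hSG hGk
    by_contra hG
    refine hmaximal G hGk hG ?_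
    intro A hA B hB
    rw [Finset.mem_insert] at hA hB
    rcases hA with rfl | hA
    · rcases hB with rfl | hB
      · rw [Finset.inter_self]
        apply Finset.card_pos.mp
        rw [hGk]; omega
      · obtain ⟨y, hy⟩ := hS' B hB
        rw [Finset.mem_inter] at hy
        exact ⟨y, Finset.mem_inter.mpr ⟨hSG hy.1, hy.2⟩⟩
    · rcases hB with rfl | hB
      · obtain ⟨y, hy⟩ := hS' A hA
        rw [Finset.mem_inter] at hy
        exact ⟨y, Finset.mem_inter.mpr ⟨hy.2, hSG hy.1⟩⟩
      · exact hintersecting A hA B hB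
  -- S and T intersect
  have hcommon : (S ∩ T).Nonempty := by
    by_contra hdisj
    have havail : u + 2 ≤ (Finset.univ \ (S ∪ T)).card := by
      rw [Finset.card_sdiff_of_subset (Finset.subset_univ _), Finset.card_univ, Fintype.card_fin]
      have := Finset.card_union_le S T
      omega
    obtain ⟨t, htsub, htcard⟩ := Finset.exists_subset_card_eq havail
    have hdisjSt : Disjoint S t := by
      rw [Finset.disjoint_left]
      intro y hyS hyt
      have := htsub hyt
      rw [Finset.mem_sdiff, Finset.mem_union] at this
      exact this.2 (Or.inl hyS)
    have hGcard : (S ∪ t).card = u + 4 := by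
      rw [Finset.card_union_of_disjoint hdisjSt, hScard, htcard]
      omega
    have hGF : S ∪ t ∈ F := hsup S hScov (S ∪ t) Finset.subset_union_left hGcard
    obtain ⟨y, hy⟩ := hTcov (S ∪ t) hGF
    rw [Finset.mem_inter, Finset.mem_union] at hy
    rcases hy.2 with hyS | hyt
    · exact hdisj ⟨y, Finset.mem_inter.mpr ⟨hyS, hy.1⟩⟩
    · have := htsub hyt
      rw [Finset.mem_sdiff, Finset.mem_union] at this
      exact this.2 (Or.inr hy.1)
  obtain ⟨a, ha⟩ := hcommon
  rw [Finset.mem_inter] at ha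
  obtain ⟨haS, haT⟩ := ha
  have hSe : (S.erase a).card = 1 := by rw [Finset.card_erase_of_mem haS, hScard]
  obtain ⟨b, hb⟩ := Finset.card_eq_one.mp hSe
  have hbmem : b ∈ S.erase a := by rw [hb]; exact Finset.mem_singleton_self b
  have hbS : b ∈ S := Finset.mem_of_mem_erase hbmem
  have hba : b ≠ a := Finset.ne_of_mem_erase hbmem
  have hS2 : insert a {b} = S := by rw [← hb]; exact Finset.insert_erase haS
  have hTe : (T.erase a).card = 1 := by rw [Finset.card_erase_of_mem haT, hTcard]
  obtain ⟨c, hc⟩ := Finset.card_eq_one.mp hTe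
  have hcmem : c ∈ T.erase a := by rw [hc]; exact Finset.mem_singleton_self c
  have hcT : c ∈ T := Finset.mem_of_mem_erase hcmem
  have hca : c ≠ a := Finset.ne_of_mem_erase hcmem
  have hT2 : insert a {c} = T := by rw [← hc]; exact Finset.insert_erase haT
  have hbc : b ≠ c := by
    intro h
    apply hST
    rw [← hS2, ← hT2, h]
  have hmemS : ∀ y, y ∈ S ↔ (y = a ∨ y = b) := by
    intro y; rw [← hS2]; simp
  have hmemT : ∀ y, y ∈ T ↔ (y = a ∨ y = c) := by
    intro y; rw [← hT2]; simp
  have hcovS : ∀ A ∈ F, a ∉ A → b ∈ A := by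
    intro A hA haA
    obtain ⟨y, hy⟩ := hScov A hA
    rw [Finset.mem_inter] at hy
    rcases (hmemS y).mp hy.1 with rfl | rfl
    · exact absurd hy.2 haA
    · exact hy.2
  have hcovT : ∀ A ∈ F, a ∉ A → c ∈ A := by
    intro A hA haA
    obtain ⟨y, hy⟩ := hTcov A hA
    rw [Finset.mem_inter] at hy
    rcases (hmemT y).mp hy.1 with rfl | rfl
    · exact absurd hy.2 haA
    · exact hy.2
  -- a member avoiding a
  have hssub : ({a} : Finset (Fin n)) ⊂ S := by
    rw [Finset.ssubset_iff_subset_ne]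
    refine ⟨Finset.singleton_subset_iff.mpr haS, ?_⟩
    intro h
    apply hba
    have : b ∈ ({a} : Finset (Fin n)) := by rw [h]; exact hbS
    simpa using this
  have hnotcov := hSmin {a} hssub
  push_neg at hnotcov
  obtain ⟨A₀, hA₀F, hA₀⟩ := hnotcov
  have haA₀ : a ∉ A₀ := by
    intro h
    exact Finset.nonempty_iff_ne_empty.mp ⟨a, Finset.mem_inter.mpr ⟨Finset.mem_singleton_self a, h⟩⟩ hA₀
  have hbA₀ : b ∈ A₀ := hcovS A₀ hA₀F haA₀
  have hcA₀ : c ∈ A₀ := hcovT A₀ hA₀F haA₀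
  have hA₀card : A₀.card = u+4 := huniform A₀ hA₀F
  -- translated arithmetic inequalities
  have hbig : 2*(u+3)*(2*u+3) + u + 3 + (u+4+3) ≤ n := by nlinarith
  have hq' : 2*(u+3)*(2*u+3) + u + 3 ≤ n-(u+4)-3 := by
    generalize hM : 2*(u+3)*(2*u+3) = M at hbig ⊢
    omega
  have IA := ineqA' (n-(u+4)-3) u hq'
  rw [show n-(u+4)-3+u+4 = n-3 by omega, show n-(u+4)-3+u+3 = n-4 by omega,
      show n-(u+4)-3+1 = n-(u+4)-2 by omega, show n-(u+4)-3+u+5 = n-2 by omega] at IA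
  have IB1 := ineqB1' (n-(u+4)-3) u
  rw [show n-(u+4)-3+u+4 = n-3 by omega, show n-(u+4)-3+u+3 = n-4 by omega,
      show n-(u+4)-3+u+5 = n-2 by omega] at IB1
  have IB2 := ineqB2' (n-(u+4)-3) u hq'
  rw [show n-(u+4)-3+u+4 = n-3 by omega, show n-(u+4)-3+u+3 = n-4 by omega,
      show n-(u+4)-3+1 = n-(u+4)-2 by omega, show n-(u+4)-3+u+5 = n-2 by omega] at IB2
  by_cases hbccov : ∀ A ∈ F, b ∈ A ∨ c ∈ A
  · -- Case A : {b,c} is also a cover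
    obtain ⟨x, hx⟩ : ∃ x : Fin n, x ∉ ({a,b,c} : Finset (Fin n)) := by
      apply exists_not_mem_fin
      have h1 := Finset.card_insert_le a ({b,c} : Finset (Fin n))
      have h2 := Finset.card_insert_le b ({c} : Finset (Fin n))
      have h3 : ({c} : Finset (Fin n)).card = 1 := Finset.card_singleton c
      omega
    have hxa : x ≠ a := fun h => hx (by rw [h]; simp)
    have hxb : x ≠ b := fun h => hx (by rw [h]; simp)
    have hxc : x ≠ c := fun h => hx (by rw [h]; simp)
    have hc3 : ({x,a,b} : Finset (Fin n)).card = 3 := by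
      rw [Finset.card_insert_of_notMem (by simp [hxa, hxb]),
        Finset.card_insert_of_notMem (by simp [Ne.symm hba]), Finset.card_singleton]
    have hc3' : ({x,a,c} : Finset (Fin n)).card = 3 := by
      rw [Finset.card_insert_of_notMem (by simp [hxa, hxc]),
        Finset.card_insert_of_notMem (by simp [Ne.symm hca]), Finset.card_singleton]
    have hc3'' : ({x,b,c} : Finset (Fin n)).card = 3 := by
      rw [Finset.card_insert_of_notMem (by simp [hxb, hxc]),
        Finset.card_insert_of_notMem (by simp [hbc]), Finset.card_singleton]
    have hB1 : (F.filter (fun A => x ∈ A ∧ a ∈ A ∧ b ∈ A)).card ≤ (n-3).choose (u+1) := by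
      have hb := bound_cnt F huniform (fun A => x ∈ A ∧ a ∈ A ∧ b ∈ A) {x,a,b} ∅
        (fun A hA hp => ⟨Finset.insert_subset_iff.mpr ⟨hp.1, Finset.insert_subset_iff.mpr
          ⟨hp.2.1, Finset.singleton_subset_iff.mpr hp.2.2⟩⟩, Finset.disjoint_empty_right A⟩)
        (Finset.disjoint_empty_right _) (by rw [hc3]; omega)
      rw [hc3, Finset.card_empty] at hb
      rw [show n-(3+0) = n-3 by omega, show u+4-3 = u+1 by omega] at hb
      exact hb
    have hB2 : (F.filter (fun A => x ∈ A ∧ a ∈ A ∧ c ∈ A ∧ b ∉ A)).card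
        ≤ (n-4).choose (u+1) := by
      have hb := bound_cnt F huniform (fun A => x ∈ A ∧ a ∈ A ∧ c ∈ A ∧ b ∉ A) {x,a,c} {b}
        (fun A hA hp => ⟨Finset.insert_subset_iff.mpr ⟨hp.1, Finset.insert_subset_iff.mpr
          ⟨hp.2.1, Finset.singleton_subset_iff.mpr hp.2.2.1⟩⟩,
          Finset.disjoint_singleton_right.mpr hp.2.2.2⟩)
        (by rw [Finset.disjoint_singleton_right]; simp [Ne.symm hxb, hba, hbc]) (by rw [hc3']; omega)
      rw [hc3', Finset.card_singleton] at hb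
      rw [show n-(3+1) = n-4 by omega, show u+4-3 = u+1 by omega] at hb
      exact hb
    have hB4 : (F.filter (fun A => x ∈ A ∧ a ∉ A)).card ≤ (n-4).choose (u+1) := by
      have hb := bound_cnt F huniform (fun A => x ∈ A ∧ a ∉ A) {x,b,c} {a}
        (fun A hA hp => ⟨Finset.insert_subset_iff.mpr ⟨hp.1, Finset.insert_subset_iff.mpr
          ⟨hcovS A hA hp.2, Finset.singleton_subset_iff.mpr (hcovT A hA hp.2)⟩⟩,
          Finset.disjoint_singleton_right.mpr hp.2⟩)
        (by rw [Finset.disjoint_singleton_right]; simp [Ne.symm hxa, Ne.symm hba, Ne.symm hca])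
        (by rw [hc3'']; omega)
      rw [hc3'', Finset.card_singleton] at hb
      rw [show n-(3+1) = n-4 by omega, show u+4-3 = u+1 by omega] at hb
      exact hb
    have hsplit : F.filter (fun A => x ∈ A) ⊆
        F.filter (fun A => x ∈ A ∧ a ∈ A ∧ b ∈ A)
        ∪ F.filter (fun A => x ∈ A ∧ a ∈ A ∧ c ∈ A ∧ b ∉ A)
        ∪ F.filter (fun A => x ∈ A ∧ a ∉ A) := by
      intro A hA
      rw [Finset.mem_filter] at hA
      obtain ⟨hAF, hxA⟩ := hA
      simp only [Finset.mem_union, Finset.mem_filter]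
      by_cases haA : a ∈ A
      · by_cases hbA : b ∈ A
        · exact Or.inl (Or.inl ⟨hAF, hxA, haA, hbA⟩)
        · rcases hbccov A hAF with h | h
          · exact absurd h hbA
          · exact Or.inl (Or.inr ⟨hAF, hxA, haA, h, hbA⟩)
      · exact Or.inr ⟨hAF, hxA, haA⟩
    have hdle : (F.filter (fun A => x ∈ A)).card ≤
        (F.filter (fun A => x ∈ A ∧ a ∈ A ∧ b ∈ A)).card
        + (F.filter (fun A => x ∈ A ∧ a ∈ A ∧ c ∈ A ∧ b ∉ A)).card
        + (F.filter (fun A => x ∈ A ∧ a ∉ A)).card := by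
      have h0 := Finset.card_le_card hsplit
      have h1 := Finset.card_union_le
        (F.filter (fun A => x ∈ A ∧ a ∈ A ∧ b ∈ A)
          ∪ F.filter (fun A => x ∈ A ∧ a ∈ A ∧ c ∈ A ∧ b ∉ A))
        (F.filter (fun A => x ∈ A ∧ a ∉ A))
      have h2 := Finset.card_union_le (F.filter (fun A => x ∈ A ∧ a ∈ A ∧ b ∈ A))
        (F.filter (fun A => x ∈ A ∧ a ∈ A ∧ c ∈ A ∧ b ∉ A))
      omega
    have hdx := hdelta x
    omega
  · -- Case B : there is a member avoiding both b and c
    push_neg at hbccov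
    obtain ⟨B₁, hB₁F, hbB₁, hcB₁⟩ := hbccov
    have haB₁ : a ∈ B₁ := by
      obtain ⟨y, hy⟩ := hScov B₁ hB₁F
      rw [Finset.mem_inter] at hy
      rcases (hmemS y).mp hy.1 with rfl | rfl
      · exact hy.2
      · exact absurd hy.2 hbB₁
    have hB₁card : B₁.card = u+4 := huniform B₁ hB₁F
    by_cases hsecond : ∃ A' ∈ F, a ∉ A' ∧ A' ≠ A₀
    · -- Case B2 : at least two members avoid a
      obtain ⟨A₀', hA₀'F, haA₀', hA₀'ne⟩ := hsecond
      have hbA₀' : b ∈ A₀' := hcovS A₀' hA₀'F haA₀'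
      have hcA₀' : c ∈ A₀' := hcovT A₀' hA₀'F haA₀'
      have hA₀'card : A₀'.card = u+4 := huniform A₀' hA₀'F
      have hUcard : u+5 ≤ (A₀ ∪ A₀').card := by
        have hIle : (A₀ ∩ A₀').card ≤ u+3 := by
          by_contra hle
          push_neg at hle
          have hsubl : A₀ ∩ A₀' ⊆ A₀ := Finset.inter_subset_left
          have hcl : (A₀ ∩ A₀').card ≤ u+4 := by
            have := Finset.card_le_card hsubl
            omega
          have heq : A₀ ∩ A₀' = A₀ := Finset.eq_of_subset_of_card_le hsubl (by omega)
          have h1 : A₀ ⊆ A₀' := by rw [← heq]; exact Finset.inter_subset_right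
          have := Finset.eq_of_subset_of_card_le h1 (by omega)
          exact hA₀'ne this.symm
        have := Finset.card_union_add_card_inter A₀ A₀'
        omega
      obtain ⟨E, hEsub, hEcard⟩ := Finset.exists_subset_card_eq hUcard
      obtain ⟨x, hx⟩ := exists_not_mem_fin (insert a (insert b (insert c (A₀ ∪ A₀' ∪ B₁)))) (by
        have h1 := Finset.card_insert_le a (insert b (insert c (A₀ ∪ A₀' ∪ B₁)))
        have h2 := Finset.card_insert_le b (insert c (A₀ ∪ A₀' ∪ B₁))
        have h3 := Finset.card_insert_le c (A₀ ∪ A₀' ∪ B₁)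
        have h4 := Finset.card_union_le (A₀ ∪ A₀') B₁
        have h5 := Finset.card_union_le A₀ A₀'
        have hn3 : 3*(u+4)+4 ≤ n := hn8
        omega)
      have hxa : x ≠ a := fun h => hx (by rw [h]; simp)
      have hxb : x ≠ b := fun h => hx (by rw [h]; simp)
      have hxc : x ≠ c := fun h => hx (by rw [h]; simp)
      have hxA₀ : x ∉ A₀ := fun h => hx (by simp [h])
      have hxA₀' : x ∉ A₀' := fun h => hx (by simp [h])
      have hxB₁ : x ∉ B₁ := fun h => hx (by simp [h])
      have hc3 : ({x,a,b} : Finset (Fin n)).card = 3 := by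
        rw [Finset.card_insert_of_notMem (by simp [hxa, hxb]),
          Finset.card_insert_of_notMem (by simp [Ne.symm hba]), Finset.card_singleton]
      have hc3' : ({x,a,c} : Finset (Fin n)).card = 3 := by
        rw [Finset.card_insert_of_notMem (by simp [hxa, hxc]),
          Finset.card_insert_of_notMem (by simp [Ne.symm hca]), Finset.card_singleton]
      have hc3'' : ({x,b,c} : Finset (Fin n)).card = 3 := by
        rw [Finset.card_insert_of_notMem (by simp [hxb, hxc]),
          Finset.card_insert_of_notMem (by simp [hbc]), Finset.card_singleton]
      have hc2 : ({x,a} : Finset (Fin n)).card = 2 := by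
        rw [Finset.card_insert_of_notMem (by simp [hxa]), Finset.card_singleton]
      have hcW : ({b,c} : Finset (Fin n)).card = 2 := by
        rw [Finset.card_insert_of_notMem (by simp [hbc]), Finset.card_singleton]
      have hB1 : (F.filter (fun A => x ∈ A ∧ a ∈ A ∧ b ∈ A)).card ≤ (n-3).choose (u+1) := by
        have hb := bound_cnt F huniform (fun A => x ∈ A ∧ a ∈ A ∧ b ∈ A) {x,a,b} ∅
          (fun A hA hp => ⟨Finset.insert_subset_iff.mpr ⟨hp.1, Finset.insert_subset_iff.mpr
            ⟨hp.2.1, Finset.singleton_subset_iff.mpr hp.2.2⟩⟩, Finset.disjoint_empty_right A⟩)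
          (Finset.disjoint_empty_right _) (by rw [hc3]; omega)
        rw [hc3, Finset.card_empty] at hb
        rw [show n-(3+0) = n-3 by omega, show u+4-3 = u+1 by omega] at hb
        exact hb
      have hB2 : (F.filter (fun A => x ∈ A ∧ a ∈ A ∧ c ∈ A ∧ b ∉ A)).card
          ≤ (n-4).choose (u+1) := by
        have hb := bound_cnt F huniform (fun A => x ∈ A ∧ a ∈ A ∧ c ∈ A ∧ b ∉ A) {x,a,c} {b}
          (fun A hA hp => ⟨Finset.insert_subset_iff.mpr ⟨hp.1, Finset.insert_subset_iff.mpr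
            ⟨hp.2.1, Finset.singleton_subset_iff.mpr hp.2.2.1⟩⟩,
            Finset.disjoint_singleton_right.mpr hp.2.2.2⟩)
          (by rw [Finset.disjoint_singleton_right]; simp [Ne.symm hxb, hba, hbc])
          (by rw [hc3']; omega)
        rw [hc3', Finset.card_singleton] at hb
        rw [show n-(3+1) = n-4 by omega, show u+4-3 = u+1 by omega] at hb
        exact hb
      have hdB : Disjoint ({x,a} : Finset (Fin n)) A₀ := by
        rw [Finset.disjoint_left]
        intro y hy hyA
        simp only [Finset.mem_insert, Finset.mem_singleton] at hy
        rcases hy with rfl | rfl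
        · exact hxA₀ hyA
        · exact haA₀ hyA
      have hdB' : Disjoint ({x,a} : Finset (Fin n)) A₀' := by
        rw [Finset.disjoint_left]
        intro y hy hyA
        simp only [Finset.mem_insert, Finset.mem_singleton] at hy
        rcases hy with rfl | rfl
        · exact hxA₀' hyA
        · exact haA₀' hyA
      have hB3 := bound_sub2 F huniform hintersecting
        (fun A => x ∈ A ∧ a ∈ A ∧ b ∉ A ∧ c ∉ A) {x,a} {b,c} A₀ A₀' E hA₀F hA₀'F
        (Finset.insert_subset_iff.mpr ⟨hbA₀, Finset.singleton_subset_iff.mpr hcA₀⟩)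
        (Finset.insert_subset_iff.mpr ⟨hbA₀', Finset.singleton_subset_iff.mpr hcA₀'⟩)
        hEsub
        (fun A hA hp => ⟨Finset.insert_subset_iff.mpr
          ⟨hp.1, Finset.singleton_subset_iff.mpr hp.2.1⟩,
          Finset.disjoint_insert_right.mpr ⟨hp.2.2.1,
            Finset.disjoint_singleton_right.mpr hp.2.2.2⟩⟩)
        hdB hdB' (by rw [hc2]; omega)
      rw [hc2, hcW, hA₀card, hA₀'card, hEcard] at hB3
      rw [show n-(2+(u+4)) = n-(u+4)-2 by omega, show n-(2+2) = n-4 by omega,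
        show n-(2+(u+5)) = n-(u+4)-3 by omega, show u+4-2 = u+2 by omega] at hB3
      have hB4 := bound_sub F huniform hintersecting
        (fun A => x ∈ A ∧ a ∉ A) {x,b,c} {a} B₁ B₁ hB₁F subset_rfl
        (Finset.singleton_subset_iff.mpr haB₁)
        (fun A hA hp => ⟨Finset.insert_subset_iff.mpr ⟨hp.1, Finset.insert_subset_iff.mpr
          ⟨hcovS A hA hp.2, Finset.singleton_subset_iff.mpr (hcovT A hA hp.2)⟩⟩,
          Finset.disjoint_singleton_right.mpr hp.2⟩)
        (by
          rw [Finset.disjoint_left]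
          intro y hy hyB
          simp only [Finset.mem_insert, Finset.mem_singleton] at hy
          rcases hy with rfl | rfl | rfl
          · exact hxB₁ hyB
          · exact hbB₁ hyB
          · exact hcB₁ hyB)
        (by rw [hc3'']; omega)
      rw [hc3'', Finset.card_singleton, hB₁card] at hB4
      rw [show n-(3+(u+4)) = n-(u+4)-3 by omega, show n-(3+1) = n-4 by omega,
        show u+4-3 = u+1 by omega] at hB4
      have hsplit : F.filter (fun A => x ∈ A) ⊆
          F.filter (fun A => x ∈ A ∧ a ∈ A ∧ b ∈ A)
          ∪ F.filter (fun A => x ∈ A ∧ a ∈ A ∧ c ∈ A ∧ b ∉ A)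
          ∪ F.filter (fun A => x ∈ A ∧ a ∈ A ∧ b ∉ A ∧ c ∉ A)
          ∪ F.filter (fun A => x ∈ A ∧ a ∉ A) := by
        intro A hA
        rw [Finset.mem_filter] at hA
        obtain ⟨hAF, hxA⟩ := hA
        simp only [Finset.mem_union, Finset.mem_filter]
        by_cases haA : a ∈ A
        · by_cases hbA : b ∈ A
          · exact Or.inl (Or.inl (Or.inl ⟨hAF, hxA, haA, hbA⟩))
          · by_cases hcA : c ∈ A
            · exact Or.inl (Or.inl (Or.inr ⟨hAF, hxA, haA, hcA, hbA⟩))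
            · exact Or.inl (Or.inr ⟨hAF, hxA, haA, hbA, hcA⟩)
        · exact Or.inr ⟨hAF, hxA, haA⟩
      have hdle : (F.filter (fun A => x ∈ A)).card ≤
          (F.filter (fun A => x ∈ A ∧ a ∈ A ∧ b ∈ A)).card
          + (F.filter (fun A => x ∈ A ∧ a ∈ A ∧ c ∈ A ∧ b ∉ A)).card
          + (F.filter (fun A => x ∈ A ∧ a ∈ A ∧ b ∉ A ∧ c ∉ A)).card
          + (F.filter (fun A => x ∈ A ∧ a ∉ A)).card := by
        have h0 := Finset.card_le_card hsplit
        have h1 := Finset.card_union_le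
          (F.filter (fun A => x ∈ A ∧ a ∈ A ∧ b ∈ A)
            ∪ F.filter (fun A => x ∈ A ∧ a ∈ A ∧ c ∈ A ∧ b ∉ A)
            ∪ F.filter (fun A => x ∈ A ∧ a ∈ A ∧ b ∉ A ∧ c ∉ A))
          (F.filter (fun A => x ∈ A ∧ a ∉ A))
        have h2 := Finset.card_union_le
          (F.filter (fun A => x ∈ A ∧ a ∈ A ∧ b ∈ A)
            ∪ F.filter (fun A => x ∈ A ∧ a ∈ A ∧ c ∈ A ∧ b ∉ A))
          (F.filter (fun A => x ∈ A ∧ a ∈ A ∧ b ∉ A ∧ c ∉ A))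
        have h3 := Finset.card_union_le (F.filter (fun A => x ∈ A ∧ a ∈ A ∧ b ∈ A))
          (F.filter (fun A => x ∈ A ∧ a ∈ A ∧ c ∈ A ∧ b ∉ A))
        omega
      have hdx := hdelta x
      omega
    · -- Case B1 : A₀ is the unique member avoiding a
      push_neg at hsecond
      obtain ⟨x, hx⟩ := exists_not_mem_fin (insert a (insert b (insert c A₀))) (by
        have h1 := Finset.card_insert_le a (insert b (insert c A₀))
        have h2 := Finset.card_insert_le b (insert c A₀)
        have h3 := Finset.card_insert_le c A₀
        omega)
      have hxa : x ≠ a := fun h => hx (by rw [h]; simp)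
      have hxb : x ≠ b := fun h => hx (by rw [h]; simp)
      have hxc : x ≠ c := fun h => hx (by rw [h]; simp)
      have hxA₀ : x ∉ A₀ := fun h => hx (by simp [h])
      have hc3 : ({x,a,b} : Finset (Fin n)).card = 3 := by
        rw [Finset.card_insert_of_notMem (by simp [hxa, hxb]),
          Finset.card_insert_of_notMem (by simp [Ne.symm hba]), Finset.card_singleton]
      have hc3' : ({x,a,c} : Finset (Fin n)).card = 3 := by
        rw [Finset.card_insert_of_notMem (by simp [hxa, hxc]),
          Finset.card_insert_of_notMem (by simp [Ne.symm hca]), Finset.card_singleton]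
      have hc2 : ({x,a} : Finset (Fin n)).card = 2 := by
        rw [Finset.card_insert_of_notMem (by simp [hxa]), Finset.card_singleton]
      have hB1 : (F.filter (fun A => x ∈ A ∧ a ∈ A ∧ b ∈ A)).card ≤ (n-3).choose (u+1) := by
        have hb := bound_cnt F huniform (fun A => x ∈ A ∧ a ∈ A ∧ b ∈ A) {x,a,b} ∅
          (fun A hA hp => ⟨Finset.insert_subset_iff.mpr ⟨hp.1, Finset.insert_subset_iff.mpr
            ⟨hp.2.1, Finset.singleton_subset_iff.mpr hp.2.2⟩⟩, Finset.disjoint_empty_right A⟩)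
          (Finset.disjoint_empty_right _) (by rw [hc3]; omega)
        rw [hc3, Finset.card_empty] at hb
        rw [show n-(3+0) = n-3 by omega, show u+4-3 = u+1 by omega] at hb
        exact hb
      have hB2 : (F.filter (fun A => x ∈ A ∧ a ∈ A ∧ c ∈ A ∧ b ∉ A)).card
          ≤ (n-4).choose (u+1) := by
        have hb := bound_cnt F huniform (fun A => x ∈ A ∧ a ∈ A ∧ c ∈ A ∧ b ∉ A) {x,a,c} {b}
          (fun A hA hp => ⟨Finset.insert_subset_iff.mpr ⟨hp.1, Finset.insert_subset_iff.mpr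
            ⟨hp.2.1, Finset.singleton_subset_iff.mpr hp.2.2.1⟩⟩,
            Finset.disjoint_singleton_right.mpr hp.2.2.2⟩)
          (by rw [Finset.disjoint_singleton_right]; simp [Ne.symm hxb, hba, hbc])
          (by rw [hc3']; omega)
        rw [hc3', Finset.card_singleton] at hb
        rw [show n-(3+1) = n-4 by omega, show u+4-3 = u+1 by omega] at hb
        exact hb
      have hdB : Disjoint ({x,a} : Finset (Fin n)) A₀ := by
        rw [Finset.disjoint_left]
        intro y hy hyA
        simp only [Finset.mem_insert, Finset.mem_singleton] at hy
        rcases hy with rfl | rfl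
        · exact hxA₀ hyA
        · exact haA₀ hyA
      have hB3 := bound_sub F huniform hintersecting
        (fun A => x ∈ A ∧ a ∈ A ∧ b ∉ A ∧ c ∉ A) {x,a} {b,c} A₀ A₀ hA₀F subset_rfl
        (Finset.insert_subset_iff.mpr ⟨hbA₀, Finset.singleton_subset_iff.mpr hcA₀⟩)
        (fun A hA hp => ⟨Finset.insert_subset_iff.mpr
          ⟨hp.1, Finset.singleton_subset_iff.mpr hp.2.1⟩,
          Finset.disjoint_insert_right.mpr ⟨hp.2.2.1,
            Finset.disjoint_singleton_right.mpr hp.2.2.2⟩⟩)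
        hdB (by rw [hc2]; omega)
      have hcW : ({b,c} : Finset (Fin n)).card = 2 := by
        rw [Finset.card_insert_of_notMem (by simp [hbc]), Finset.card_singleton]
      rw [hc2, hcW, hA₀card] at hB3
      rw [show n-(2+(u+4)) = n-(u+4)-2 by omega, show n-(2+2) = n-4 by omega,
        show u+4-2 = u+2 by omega] at hB3
      have hB4 : (F.filter (fun A => x ∈ A ∧ a ∉ A)).card = 0 := by
        rw [Finset.card_eq_zero]
        rw [Finset.filter_eq_empty_iff]
        intro A hAF hp
        have := hsecond A hAF hp.2
        rw [this] at hp
        exact hxA₀ hp.1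
      have hsplit : F.filter (fun A => x ∈ A) ⊆
          F.filter (fun A => x ∈ A ∧ a ∈ A ∧ b ∈ A)
          ∪ F.filter (fun A => x ∈ A ∧ a ∈ A ∧ c ∈ A ∧ b ∉ A)
          ∪ F.filter (fun A => x ∈ A ∧ a ∈ A ∧ b ∉ A ∧ c ∉ A)
          ∪ F.filter (fun A => x ∈ A ∧ a ∉ A) := by
        intro A hA
        rw [Finset.mem_filter] at hA
        obtain ⟨hAF, hxA⟩ := hA
        simp only [Finset.mem_union, Finset.mem_filter]
        by_cases haA : a ∈ A
        · by_cases hbA : b ∈ A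
          · exact Or.inl (Or.inl (Or.inl ⟨hAF, hxA, haA, hbA⟩))
          · by_cases hcA : c ∈ A
            · exact Or.inl (Or.inl (Or.inr ⟨hAF, hxA, haA, hcA, hbA⟩))
            · exact Or.inl (Or.inr ⟨hAF, hxA, haA, hbA, hcA⟩)
        · exact Or.inr ⟨hAF, hxA, haA⟩
      have hdle : (F.filter (fun A => x ∈ A)).card ≤
          (F.filter (fun A => x ∈ A ∧ a ∈ A ∧ b ∈ A)).card
          + (F.filter (fun A => x ∈ A ∧ a ∈ A ∧ c ∈ A ∧ b ∉ A)).card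
          + (F.filter (fun A => x ∈ A ∧ a ∈ A ∧ b ∉ A ∧ c ∉ A)).card
          + (F.filter (fun A => x ∈ A ∧ a ∉ A)).card := by
        have h0 := Finset.card_le_card hsplit
        have h1 := Finset.card_union_le
          (F.filter (fun A => x ∈ A ∧ a ∈ A ∧ b ∈ A)
            ∪ F.filter (fun A => x ∈ A ∧ a ∈ A ∧ c ∈ A ∧ b ∉ A)
            ∪ F.filter (fun A => x ∈ A ∧ a ∈ A ∧ b ∉ A ∧ c ∉ A))
          (F.filter (fun A => x ∈ A ∧ a ∉ A))
        have h2 := Finset.card_union_le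
          (F.filter (fun A => x ∈ A ∧ a ∈ A ∧ b ∈ A)
            ∪ F.filter (fun A => x ∈ A ∧ a ∈ A ∧ c ∈ A ∧ b ∉ A))
          (F.filter (fun A => x ∈ A ∧ a ∈ A ∧ b ∉ A ∧ c ∉ A))
        have h3 := Finset.card_union_le (F.filter (fun A => x ∈ A ∧ a ∈ A ∧ b ∈ A))
          (F.filter (fun A => x ∈ A ∧ a ∈ A ∧ c ∈ A ∧ b ∉ A))
        omega
      have hdx := hdelta x
      omega

/-- In the proof of Theorem 1.1: if `k ≥ 4`, `n ≥ 4k²`, and `F` is a maximal non-trivial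
intersecting family of `k`-subsets of `[n]` with `δ(F) > C(n-2,k-2) - C(n-k-2,k-2)`,
then the kernel of `F` contains at most one `2`-element set. -/
theorem kernel_two_bound (n k : ℕ) (hk : 4 ≤ k) (hn : 4 * k ^ 2 ≤ n)
    (F : Finset (Finset (Fin n)))
    (huniform : ∀ A ∈ F, A.card = k)
    (hintersecting : ∀ A ∈ F, ∀ B ∈ F, (A ∩ B).Nonempty)
    (hmaximal : ∀ G : Finset (Fin n), G.card = k → G ∉ F →
      ¬ (∀ A ∈ insert G F, ∀ B ∈ insert G F, (A ∩ B).Nonempty))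
    (hnontrivial : ¬ ∃ x : Fin n, ∀ A ∈ F, x ∈ A)
    (hdelta : ∀ x : Fin n,
      Nat.choose (n - 2) (k - 2) - Nat.choose (n - k - 2) (k - 2) <
        (F.filter (fun A => x ∈ A)).card) :
    {S : Finset (Fin n) | S.card = 2 ∧ (∀ A ∈ F, (S ∩ A).Nonempty) ∧
      ∀ S' ⊂ S, ¬ (∀ A ∈ F, (S' ∩ A).Nonempty)}.ncard ≤ 1 := by
  obtain ⟨u, rfl⟩ : ∃ u, k = u + 4 := ⟨k - 4, by omega⟩
  have hdelta' : ∀ x : Fin n,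
      Nat.choose (n - 2) (u+2) - Nat.choose (n - (u+4) - 2) (u+2) <
        (F.filter (fun A => x ∈ A)).card := by
    intro x
    have h := hdelta x
    rwa [show u+4-2 = u+2 by omega] at h
  set K2 := {S : Finset (Fin n) | S.card = 2 ∧ (∀ A ∈ F, (S ∩ A).Nonempty) ∧
      ∀ S' ⊂ S, ¬ (∀ A ∈ F, (S' ∩ A).Nonempty)} with hK
  rcases Set.eq_empty_or_nonempty K2 with h | ⟨S₀, hS₀⟩
  · rw [h]; simp
  · have hS₀' := hS₀
    simp only [hK, Set.mem_setOf_eq] at hS₀'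
    have heq : K2 = {S₀} := by
      apply Set.eq_singleton_iff_unique_mem.mpr
      refine ⟨hS₀, ?_⟩
      intro T hT
      simp only [hK, Set.mem_setOf_eq] at hT
      exact cover_unique n u hn F huniform hintersecting hmaximal hdelta' T S₀
        hT.1 hT.2.1 hT.2.2 hS₀'.1 hS₀'.2.1
    rw [heq]
    exact le_of_eq (Set.ncard_singleton S₀)
end
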